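/- arXiv:1307.7307 — 4 statements merged into one kernel-verified Lean document; each statement's English description precedes it below -/
import Mathlib

section
/- For the cycle C_n on n ≥ 4 vertices, the immunity number with one agent equals 2: a single agent moving always in one fixed direction around the cycle fully decontaminates C_n within at most 2n steps when τ = 2, while with τ = 1 no strategy can ever have more than two vertices simultaneously decontaminated. -/
open scoped Classical

/-- One-agent decontamination process with temporal immunity `τ` on a graph `G`,
driven by the agent's walk `agent : ℕ → V`.  At each time `t` the state consists of
the set of contaminated vertices together with the exposure time of every vertex.
Initially (time `0`) every vertex except the agent's start vertex is contaminated.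
At each step the agent's new position is decontaminated, and a decontaminated
vertex that has been continuously exposed to a contaminated neighbour for `τ`
time units (without an agent visit) becomes recontaminated. -/
noncomputable def deconState {V : Type*} (G : SimpleGraph V) (τ : ℕ)
    (agent : ℕ → V) : ℕ → (V → Prop) × (V → ℕ)
  | 0 => (fun v => v ≠ agent 0, fun _ => 0)
  | (t + 1) =>
      let C : V → Prop := (deconState G τ agent t).1
      let X : V → ℕ := (deconState G τ agent t).2
      let p : V := agent (t + 1)
      -- contamination after the agent's move, before recontamination
      let C' : V → Prop := fun v => C v ∧ v ≠ p
      -- recontamination of exposed vertices whose exposure time has reached τ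
      let C'' : V → Prop := fun v =>
        C' v ∨ (v ≠ p ∧ ¬ C v ∧ (∃ w, G.Adj v w ∧ C' w) ∧ τ ≤ X v)
      (C'', fun v =>
        if v = p ∨ C'' v ∨ ¬ (∃ w, G.Adj v w ∧ C'' w) then 0 else X v + 1)

/-- The agent moves along edges of `G` (or stays put) at each time step. -/
def IsWalkStrategy {V : Type*} (G : SimpleGraph V) (agent : ℕ → V) : Prop :=
  ∀ t, agent (t + 1) = agent t ∨ G.Adj (agent t) (agent (t + 1))

/-- At time `T` every vertex is decontaminated. -/
def CleanAt {V : Type*} (G : SimpleGraph V) (τ : ℕ) (agent : ℕ → V) (T : ℕ) : Prop :=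
  ∀ v, ¬ (deconState G τ agent T).1 v

/-- The strategy `agent` fully decontaminates `G` with temporal immunity `τ`. -/
def Decontaminates {V : Type*} (G : SimpleGraph V) (τ : ℕ) (agent : ℕ → V) : Prop :=
  IsWalkStrategy G agent ∧ ∃ T, CleanAt G τ agent T

/-- `G` can be fully decontaminated by one agent with temporal immunity `τ`. -/
def CanDecon {V : Type*} (G : SimpleGraph V) (τ : ℕ) : Prop :=
  ∃ agent : ℕ → V, Decontaminates G τ agent

/-- The immunity number `ι(G)`: the least temporal immunity with which a single
agent can fully decontaminate `G`. -/
noncomputable def iotaNum {V : Type*} (G : SimpleGraph V) : ℕ :=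
  sInf {τ | CanDecon G τ}

/-- A strategy is monotone if a decontaminated vertex never gets recontaminated. -/
def MonotoneStrategy {V : Type*} (G : SimpleGraph V) (τ : ℕ) (agent : ℕ → V) : Prop :=
  ∀ t v, ¬ (deconState G τ agent t).1 v → ¬ (deconState G τ agent (t + 1)).1 v

open Fin.NatCast Fin.CommRing

namespace ImmAux

variable {n : ℕ}

lemma window_inj [NeZero n] {a j j' : ℕ} (h1 : a ≤ j) (h2 : j < a + n)
    (h3 : a ≤ j') (h4 : j' < a + n) (h : (j : Fin n) = (j' : Fin n)) : j = j' := by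
  have hval := congrArg Fin.val h
  rw [Fin.val_natCast, Fin.val_natCast] at hval
  have hmod : j % n = j' % n := hval
  rcases le_total j j' with hle | hle
  · have hdvd : n ∣ j' - j := (Nat.modEq_iff_dvd' hle).mp hmod
    have := Nat.eq_zero_of_dvd_of_lt hdvd (by omega)
    omega
  · have hdvd : n ∣ j - j' := (Nat.modEq_iff_dvd' hle).mp hmod.symm
    have := Nat.eq_zero_of_dvd_of_lt hdvd (by omega)
    omega

lemma exists_rep [NeZero n] (a : ℕ) (v : Fin n) :
    ∃ j, a ≤ j ∧ j < a + n ∧ (j : Fin n) = v := by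
  have hn : 0 < n := Nat.pos_of_ne_zero (NeZero.ne n)
  have hv : v.val < n := v.isLt
  have h1 : a % n < n := Nat.mod_lt _ hn
  have h2 : n * (a / n) + a % n = a := Nat.div_add_mod a n
  have hcast : ∀ m : ℕ, ((v.val + n * m : ℕ) : Fin n) = v := by
    intro m
    push_cast [Fin.natCast_self]
    simp [Fin.cast_val_eq_self]
  set j0 := v.val + n * (a / n + 1) with hj0
  have hc0 : (j0 : Fin n) = v := hcast _
  have hj0a : a < j0 ∧ j0 < a + 2 * n := by
    constructor <;> [skip; skip] <;> · simp only [hj0, Nat.mul_add, Nat.mul_one]; omega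
  by_cases hcase : j0 < a + n
  · exact ⟨j0, by omega, hcase, hc0⟩
  · refine ⟨j0 - n, by omega, by omega, ?_⟩
    have : ((j0 - n : ℕ) : Fin n) = ((j0 - n : ℕ) : Fin n) + ((n : ℕ) : Fin n) := by
      rw [Fin.natCast_self]; ring
    rw [this, ← Nat.cast_add]
    have : j0 - n + n = j0 := by omega
    rw [this, hc0]

lemma adj_iff [NeZero n] (hn : 4 ≤ n) (u v : Fin n) :
    (SimpleGraph.cycleGraph n).Adj u v ↔ u = v + 1 ∨ v = u + 1 := by
  obtain ⟨m, hm⟩ : ∃ m, n = m + 4 := ⟨n - 4, by omega⟩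
  subst hm
  rw [SimpleGraph.cycleGraph_adj (n := m + 2), sub_eq_iff_eq_add, sub_eq_iff_eq_add]
  simp [add_comm]

lemma adj_cast [NeZero n] (hn : 4 ≤ n) (j : ℕ) (w : Fin (n)) :
    ((SimpleGraph.cycleGraph n).Adj ((j : ℕ) : Fin n) w ↔
      w = ((j + 1 : ℕ) : Fin n) ∨ w = ((j + n - 1 : ℕ) : Fin n)) := by
  rw [adj_iff hn]
  have h1 : ((j + 1 : ℕ) : Fin n) = ((j : ℕ) : Fin n) + 1 := by push_cast; ring
  have h2 : ((j + n - 1 : ℕ) : Fin n) + 1 = ((j : ℕ) : Fin n) := by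
    have e1 : ((j + n : ℕ) : Fin n) = ((j : ℕ) : Fin n) := by
      push_cast [Fin.natCast_self]; ring
    calc ((j + n - 1 : ℕ) : Fin n) + 1 = (((j + n - 1) + 1 : ℕ) : Fin n) := by push_cast; ring
      _ = ((j + n : ℕ) : Fin n) := by rw [show (j + n - 1) + 1 = j + n from by omega]
      _ = _ := e1
  constructor
  · rintro (h | h)
    · exact Or.inr (add_right_cancel (a := w) (b := (1 : Fin n)) (by rw [h2, h]))
    · exact Or.inl (by rw [h, h1])
  · rintro (h | h)
    · exact Or.inr (by rw [h, h1])
    · exact Or.inl (by rw [h, h2])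

end ImmAux

namespace ImmAux

variable {V : Type*} {G : SimpleGraph V} {τ : ℕ} {ag : ℕ → V}

lemma dsf (t : ℕ) (v : V) :
    (deconState G τ ag (t+1)).1 v ↔
      ((deconState G τ ag t).1 v ∧ v ≠ ag (t+1)) ∨
        (v ≠ ag (t+1) ∧ ¬ (deconState G τ ag t).1 v ∧
          (∃ w, G.Adj v w ∧ (deconState G τ ag t).1 w ∧ w ≠ ag (t+1)) ∧
          τ ≤ (deconState G τ ag t).2 v) := Iff.rfl

lemma dss (t : ℕ) (v : V) :
    (deconState G τ ag (t+1)).2 v =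
      if v = ag (t+1) ∨
          (((deconState G τ ag t).1 v ∧ v ≠ ag (t+1)) ∨
            (v ≠ ag (t+1) ∧ ¬ (deconState G τ ag t).1 v ∧
              (∃ w, G.Adj v w ∧ (deconState G τ ag t).1 w ∧ w ≠ ag (t+1)) ∧
              τ ≤ (deconState G τ ag t).2 v)) ∨
          ¬ (∃ w, G.Adj v w ∧
              (((deconState G τ ag t).1 w ∧ w ≠ ag (t+1)) ∨
                (w ≠ ag (t+1) ∧ ¬ (deconState G τ ag t).1 w ∧
                  (∃ u, G.Adj w u ∧ (deconState G τ ag t).1 u ∧ u ≠ ag (t+1)) ∧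
                  τ ≤ (deconState G τ ag t).2 w))) then 0
      else (deconState G τ ag t).2 v + 1 := rfl

lemma dss' (t : ℕ) (v : V) :
    (deconState G τ ag (t+1)).2 v =
      if v = ag (t+1) ∨ (deconState G τ ag (t+1)).1 v ∨
          ¬ (∃ w, G.Adj v w ∧ (deconState G τ ag (t+1)).1 w) then 0
      else (deconState G τ ag t).2 v + 1 := by
  rw [dss]
  refine if_congr ?_ rfl rfl
  exact or_congr Iff.rfl (or_congr (dsf t v).symm (not_congr (exists_congr fun w =>
    and_congr Iff.rfl (dsf t w).symm)))

lemma dsf0 (v : V) : (deconState G τ ag 0).1 v ↔ v ≠ ag 0 := Iff.rfl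

lemma dss0 (v : V) : (deconState G τ ag 0).2 v = 0 := rfl

end ImmAux

namespace ImmAux

lemma lower {n : ℕ} (hn : 4 ≤ n) {τ : ℕ} (hτ : τ ≤ 1) :
    ¬ CanDecon (SimpleGraph.cycleGraph n) τ := by
  haveI : NeZero n := ⟨by omega⟩
  rintro ⟨ag, hwalk, T, hT⟩
  set G := SimpleGraph.cycleGraph n with hG
  have ekn : ∀ k : ℕ, 0 < k → k < n → ((k : ℕ) : Fin n) ≠ 0 := by
    intro k h1 h2 h
    have := congrArg Fin.val h
    rw [Fin.val_natCast] at this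
    rw [Nat.mod_eq_of_lt h2] at this
    simp at this
    omega
  have e1 : (1 : Fin n) ≠ 0 := by
    have := ekn 1 (by omega) (by omega); rwa [Nat.cast_one] at this
  have e2 : (1 + 1 : Fin n) ≠ 0 := by
    have := ekn 2 (by omega) (by omega); rwa [show ((2:ℕ) : Fin n) = 1 + 1 by push_cast; ring] at this
  have e3 : (1 + 1 + 1 : Fin n) ≠ 0 := by
    have := ekn 3 (by omega) (by omega); rwa [show ((3:ℕ) : Fin n) = 1 + 1 + 1 by push_cast; ring] at this
  have hadd : ∀ v : Fin n, v + 1 ≠ v - 1 := by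
    intro v h
    apply e2
    have e : (1 + 1 : Fin n) = (v + 1) - (v - 1) := by ring
    rw [h, sub_self] at e
    exact e
  have inv : ∀ t, ∃ b : Fin n,
      (∀ v, ¬ (deconState G τ ag t).1 v → v = ag t ∨ v = b) ∧
      (∀ v, ¬ (deconState G τ ag t).1 v → v ≠ ag t → 1 ≤ (deconState G τ ag t).2 v) := by
    intro t
    induction t with
    | zero =>
      refine ⟨ag 0, ?_, ?_⟩
      · intro v hv; rw [dsf0] at hv; push_neg at hv; exact Or.inl hv
      · intro v hv hva; rw [dsf0] at hv; push_neg at hv; exact absurd hv hva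
    | succ t ih =>
      obtain ⟨b, hb1, hb2⟩ := ih
      have claim1 : ∀ v, ¬ (deconState G τ ag (t+1)).1 v → v = ag (t+1) ∨ v = ag t := by
        intro v hv
        by_contra hcon
        push_neg at hcon
        obtain ⟨hvp, hva⟩ := hcon
        rw [dsf] at hv
        have hclean : ¬ (deconState G τ ag t).1 v := fun h => hv (Or.inl ⟨h, hvp⟩)
        have hvb : v = b := (hb1 v hclean).resolve_left hva
        have hX : 1 ≤ (deconState G τ ag t).2 v := hb2 v hclean hva
        have hnoW : ¬ ∃ w, G.Adj v w ∧ (deconState G τ ag t).1 w ∧ w ≠ ag (t+1) :=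
          fun hw => hv (Or.inr ⟨hvp, hclean, hw, le_trans hτ hX⟩)
        have hn1 : G.Adj v (v + 1) := (adj_iff hn v (v + 1)).mpr (Or.inr rfl)
        have hn2 : G.Adj v (v - 1) := (adj_iff hn v (v - 1)).mpr (Or.inl (by ring))
        have hmem : ∀ w, G.Adj v w → w = ag t ∨ w = ag (t+1) := by
          intro w hw
          by_cases hcw : (deconState G τ ag t).1 w
          · right; by_contra hne; exact hnoW ⟨w, hw, hcw, hne⟩
          · rcases hb1 w hcw with h | h
            · exact Or.inl h
            · exact absurd (h.trans hvb.symm) (G.ne_of_adj hw).symm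
        have hap : G.Adj (ag t) (ag (t+1)) := by
          rcases hwalk t with h | h
          · exfalso
            rcases hmem _ hn1 with h1 | h1 <;> rcases hmem _ hn2 with h2 | h2 <;>
              exact hadd v (by rw [h1, h2] <;> rw [h])
          · exact h
        have haa : ag t ≠ ag (t+1) := G.ne_of_adj hap
        have helpA : ∀ u : Fin n, u + 1 = u - 1 + 1 → False := by
          intro u h
          have h' : u = u - 1 := add_right_cancel h
          apply e1
          have e : (1 : Fin n) = u - (u - 1) := by ring
          rw [← h', sub_self] at e
          exact e
        have helpB : ∀ u : Fin n, u - 1 = u + 1 + 1 → False := by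
          intro u h
          apply e3
          have e : (1 + 1 + 1 : Fin n) = (u + 1 + 1) - (u - 1) := by ring
          rw [h, sub_self] at e
          exact e
        rcases hmem _ hn1 with h1 | h1 <;> rcases hmem _ hn2 with h2 | h2
        · exact hadd v (h1.trans h2.symm)
        · rcases (adj_iff hn _ _).mp hap with h | h
          · rw [← h1, ← h2] at h; exact helpA v h
          · rw [← h1, ← h2] at h; exact helpB v h
        · rcases (adj_iff hn _ _).mp hap with h | h
          · rw [← h1, ← h2] at h; exact helpB v h
          · rw [← h1, ← h2] at h; exact helpA v h
        · exact hadd v (h1.trans h2.symm)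
      refine ⟨ag t, claim1, ?_⟩
      intro v hv hvp
      rw [dss']
      rw [if_neg]
      · omega
      · rintro (h | h | h)
        · exact hvp h
        · exact hv h
        · have hn1 : G.Adj v (v + 1) := (adj_iff hn v (v + 1)).mpr (Or.inr rfl)
          have hn2 : G.Adj v (v - 1) := (adj_iff hn v (v - 1)).mpr (Or.inl (by ring))
          have hv1 : ¬ (deconState G τ ag (t+1)).1 (v + 1) := fun hc => h ⟨v + 1, hn1, hc⟩
          have hv2 : ¬ (deconState G τ ag (t+1)).1 (v - 1) := fun hc => h ⟨v - 1, hn2, hc⟩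
          have hva : v = ag t := (claim1 v hv).resolve_left hvp
          have h1 : v + 1 = ag (t + 1) := by
            rcases claim1 _ hv1 with h' | h'
            · exact h'
            · exfalso; apply e1; have := h'.trans hva.symm
              have e : (1 : Fin n) = (v + 1) - v := by ring
              rw [this, sub_self] at e; exact e
          have h2 : v - 1 = ag (t + 1) := by
            rcases claim1 _ hv2 with h' | h'
            · exact h'
            · exfalso; apply e1; have := h'.trans hva.symm
              have e : (1 : Fin n) = v - (v - 1) := by ring
              rw [this, sub_self] at e; exact e
          exact hadd v (h1.trans h2.symm)
  obtain ⟨b, hb1, _⟩ := inv T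
  have h0 := hb1 ⟨0, by omega⟩ (hT _)
  have h1 := hb1 ⟨1, by omega⟩ (hT _)
  have h2 := hb1 ⟨2, by omega⟩ (hT _)
  rcases h0 with h0 | h0 <;> rcases h1 with h1 | h1 <;> rcases h2 with h2 | h2 <;>
    first
      | exact absurd (h0.trans h1.symm) (by intro hh; simp [Fin.ext_iff] at hh)
      | exact absurd (h0.trans h2.symm) (by intro hh; simp [Fin.ext_iff] at hh)
      | exact absurd (h1.trans h2.symm) (by intro hh; simp [Fin.ext_iff] at hh)

end ImmAux

namespace ImmAux

/-- The round-the-cycle agent. -/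
noncomputable def rag (n : ℕ) [NeZero n] : ℕ → Fin n := fun t => ((t : ℕ) : Fin n)

lemma rag_eq (n : ℕ) [NeZero n] (t : ℕ) : rag n t = ((t : ℕ) : Fin n) := rfl

lemma cast_add_n {n : ℕ} [NeZero n] (j : ℕ) : ((j + n : ℕ) : Fin n) = ((j : ℕ) : Fin n) := by
  push_cast [Fin.natCast_self]; ring

lemma key {n : ℕ} [NeZero n] (hn : 4 ≤ n) :
    ∀ t, 1 ≤ t → t ≤ 2*n - 6 → ∀ j, (t-1)/2 ≤ j → j < (t-1)/2 + n →
      ((deconState (SimpleGraph.cycleGraph n) 2 (rag n) t).1 ((j : ℕ) : Fin n) ↔ t < j) ∧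
      ((deconState (SimpleGraph.cycleGraph n) 2 (rag n) t).2 ((j : ℕ) : Fin n) =
        if j = (t-1)/2 then (if t % 2 = 1 then 1 else 2) else 0) := by
  intro t
  induction t with
  | zero => intro h; omega
  | succ t ih =>
    intro _ hle
    rcases Nat.eq_zero_or_pos t with rfl | ht
    · -- base case : t + 1 = 1
      have hC1 : ∀ j, 0 ≤ j → j < 0 + n →
          ((deconState (SimpleGraph.cycleGraph n) 2 (rag n) 1).1 ((j : ℕ) : Fin n) ↔ 1 < j) := by
        intro j hj1 hj2
        rw [show (1 : ℕ) = 0 + 1 from rfl, dsf]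
        constructor
        · rintro (⟨hc, hne⟩ | ⟨_, _, _, hX2⟩)
          · rw [dsf0] at hc
            have h0 : j ≠ 0 := fun h => hc (by rw [h]; rfl)
            have h1 : j ≠ 1 := fun h => hne (by rw [h]; rfl)
            omega
          · rw [dss0] at hX2; omega
        · intro hj
          left
          refine ⟨?_, ?_⟩
          · rw [dsf0]
            intro h
            rw [rag_eq] at h
            have := window_inj (a := 0) (by omega) (by omega) (by omega) (by omega) h
            omega
          · intro h
            rw [rag_eq] at h
            have := window_inj (a := 0) (by omega) (by omega) (by omega) (by omega) h
            omega
      intro j hj1 hj2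
      simp only [show (0+1-1)/2 = 0 from rfl] at hj1 hj2 ⊢
      refine ⟨hC1 j hj1 hj2, ?_⟩
      rw [show (0:ℕ)+1 = 0+1 from rfl, dss']
      by_cases hj0 : j = 0
      · subst hj0
        rw [if_neg, dss0]
        · norm_num
        rintro (h | h | h)
        · rw [rag_eq] at h
          have := window_inj (a := 0) (by omega) (by omega) (by omega) (by omega) h
          omega
        · exact absurd ((hC1 0 (by omega) (by omega)).mp h) (by omega)
        · apply h
          refine ⟨((0 + n - 1 : ℕ) : Fin n), ?_, ?_⟩
          · exact (adj_cast hn 0 _).mpr (Or.inr rfl)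
          · exact (hC1 (0 + n - 1) (by omega) (by omega)).mpr (by omega)
      · by_cases hj1' : j = 1
        · subst hj1'
          rw [if_pos (Or.inl (by rw [rag_eq])), if_neg (by omega)]
        · rw [if_pos (Or.inr (Or.inl ((hC1 j hj1 hj2).mpr (by omega)))), if_neg (by omega)]
    · -- inductive step, t ≥ 1, t + 1 ≤ 2*n - 6
      have ih' := ih ht (by omega)
      set L := (t - 1)/2 with hL
      have hple : t + 1 < L + n := by omega
      rcases Nat.mod_two_eq_zero_or_one t with hpar | hpar
      · -- t even, t ≥ 2
        have hCev : ∀ j, L + 1 ≤ j → j < L + 1 + n →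
            ((deconState (SimpleGraph.cycleGraph n) 2 (rag n) (t+1)).1 ((j : ℕ) : Fin n) ↔
              t + 1 < j) := by
          intro j hj1 hj2
          by_cases hTop : j = L + n
          · subst hTop
            rw [show ((L + n : ℕ) : Fin n) = ((L : ℕ) : Fin n) from cast_add_n L]
            rw [dsf]
            refine iff_of_true ?_ (by omega)
            refine Or.inr ⟨?_, ?_, ⟨((L + n - 1 : ℕ) : Fin n), ?_, ?_, ?_⟩, ?_⟩
            · intro h
              rw [rag_eq] at h
              have := window_inj (a := L) (by omega) (by omega) (by omega) hple h
              omega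
            · rw [(ih' L (by omega) (by omega)).1]; omega
            · exact (adj_cast hn L _).mpr (Or.inr rfl)
            · exact (ih' (L + n - 1) (by omega) (by omega)).1.mpr (by omega)
            · intro h
              rw [rag_eq] at h
              have := window_inj (a := L) (by omega) (by omega) (by omega) hple h
              omega
            · rw [(ih' L (by omega) (by omega)).2, if_pos rfl, if_neg (by omega)]
          · rw [dsf]
            have hCt := (ih' j (by omega) (by omega)).1
            have hXt := (ih' j (by omega) (by omega)).2
            constructor
            · rintro (⟨hc, hne⟩ | ⟨_, _, _, hX2⟩)
              · rw [hCt] at hc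
                have : j ≠ t + 1 := fun h => hne (by rw [h, rag_eq])
                omega
              · rw [hXt, if_neg (by omega)] at hX2; omega
            · intro hj
              refine Or.inl ⟨hCt.mpr (by omega), fun h => ?_⟩
              rw [rag_eq] at h
              have := window_inj (a := L) (by omega) (by omega) (by omega) hple h
              omega
        have hXev : ∀ j, L + 1 ≤ j → j < L + 1 + n →
            ((deconState (SimpleGraph.cycleGraph n) 2 (rag n) (t+1)).2 ((j : ℕ) : Fin n) =
              if j = L + 1 then 1 else 0) := by
          intro j hj1 hj2
          rw [dss']
          by_cases hjp : j = t + 1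
          · subst hjp
            rw [if_pos (Or.inl (by rw [rag_eq])), if_neg (by omega)]
          · by_cases hjc : t + 1 < j
            · rw [if_pos (Or.inr (Or.inl ((hCev j hj1 hj2).mpr hjc))), if_neg (by omega)]
            · by_cases hjL : j = L + 1
              · subst hjL
                rw [if_neg, if_pos rfl, (ih' (L+1) (by omega) (by omega)).2, if_neg (by omega)]
                rintro (h | h | h)
                · rw [rag_eq] at h
                  have := window_inj (a := L + 1) (by omega) (by omega) (by omega) (by omega) h
                  omega
                · exact absurd ((hCev (L+1) (by omega) (by omega)).mp h) (by omega)
                · apply h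
                  refine ⟨((L + n : ℕ) : Fin n), ?_, ?_⟩
                  · have := (adj_cast hn (L+1) (((L + n : ℕ) : Fin n))).mpr
                      (Or.inr (by rw [show L + 1 + n - 1 = L + n from by omega]))
                    exact this
                  · exact (hCev (L + n) (by omega) (by omega)).mpr (by omega)
              · rw [if_pos, if_neg hjL]
                refine Or.inr (Or.inr ?_)
                rintro ⟨w, hw, hcw⟩
                rcases (adj_cast hn j w).mp hw with rfl | rfl
                · exact absurd ((hCev (j+1) (by omega) (by omega)).mp hcw) (by omega)
                · rw [show ((j + n - 1 : ℕ) : Fin n) = ((j - 1 : ℕ) : Fin n) from by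
                      rw [show j + n - 1 = (j - 1) + n from by omega, cast_add_n]] at hcw
                  exact absurd ((hCev (j-1) (by omega) (by omega)).mp hcw) (by omega)
        intro j hj1 hj2
        rw [show (t+1-1)/2 = L + 1 from by omega] at hj1 hj2 ⊢
        rw [show (if (t+1) % 2 = 1 then 1 else 2) = 1 from by rw [if_pos (by omega)]]
        exact ⟨hCev j hj1 hj2, hXev j hj1 hj2⟩
      · -- t odd
        have hCodd : ∀ j, L ≤ j → j < L + n →
            ((deconState (SimpleGraph.cycleGraph n) 2 (rag n) (t+1)).1 ((j : ℕ) : Fin n) ↔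
              t + 1 < j) := by
          intro j hj1 hj2
          rw [dsf]
          have hCt := (ih' j hj1 hj2).1
          have hXt := (ih' j hj1 hj2).2
          constructor
          · rintro (⟨hc, hne⟩ | ⟨_, _, _, hX2⟩)
            · rw [hCt] at hc
              have : j ≠ t + 1 := fun h => hne (by rw [h, rag_eq])
              omega
            · rw [hXt] at hX2
              rw [if_pos hpar] at hX2
              split at hX2 <;> omega
          · intro hj
            refine Or.inl ⟨hCt.mpr (by omega), fun h => ?_⟩
            rw [rag_eq] at h
            have := window_inj (a := L) (by omega) (by omega) (by omega) hple h
            omega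
        have hXodd : ∀ j, L ≤ j → j < L + n →
            ((deconState (SimpleGraph.cycleGraph n) 2 (rag n) (t+1)).2 ((j : ℕ) : Fin n) =
              if j = L then 2 else 0) := by
          intro j hj1 hj2
          rw [dss']
          by_cases hjp : j = t + 1
          · subst hjp
            rw [if_pos (Or.inl (by rw [rag_eq])), if_neg (by omega)]
          · by_cases hjc : t + 1 < j
            · rw [if_pos (Or.inr (Or.inl ((hCodd j hj1 hj2).mpr hjc))), if_neg (by omega)]
            · by_cases hjL : j = L
              · subst hjL
                rw [if_neg, if_pos rfl, (ih' L (by omega) (by omega)).2, if_pos rfl,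
                  if_pos hpar]
                rintro (h | h | h)
                · rw [rag_eq] at h
                  have := window_inj (a := L) (by omega) (by omega) (by omega) hple h
                  omega
                · exact absurd ((hCodd L (by omega) (by omega)).mp h) (by omega)
                · apply h
                  refine ⟨((L + n - 1 : ℕ) : Fin n), ?_, ?_⟩
                  · exact (adj_cast hn L _).mpr (Or.inr rfl)
                  · exact (hCodd (L + n - 1) (by omega) (by omega)).mpr (by omega)
              · rw [if_pos, if_neg hjL]
                refine Or.inr (Or.inr ?_)
                rintro ⟨w, hw, hcw⟩
                rcases (adj_cast hn j w).mp hw with rfl | rfl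
                · exact absurd ((hCodd (j+1) (by omega) (by omega)).mp hcw) (by omega)
                · rw [show ((j + n - 1 : ℕ) : Fin n) = ((j - 1 : ℕ) : Fin n) from by
                      rw [show j + n - 1 = (j - 1) + n from by omega, cast_add_n]] at hcw
                  exact absurd ((hCodd (j-1) (by omega) (by omega)).mp hcw) (by omega)
        intro j hj1 hj2
        rw [show (t+1-1)/2 = L from by omega] at hj1 hj2 ⊢
        rw [show (if (t+1) % 2 = 1 then 1 else 2) = 2 from by rw [if_neg (by omega)]]
        exact ⟨hCodd j hj1 hj2, hXodd j hj1 hj2⟩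

lemma upper {n : ℕ} (hn : 4 ≤ n) : CanDecon (SimpleGraph.cycleGraph n) 2 := by
  haveI : NeZero n := ⟨by omega⟩
  refine ⟨rag n, ?_, 2*n - 5, ?_⟩
  · intro t
    right
    rw [adj_iff hn]
    right
    rw [rag_eq, rag_eq]
    push_cast
    ring
  · have hkey := key hn (2*n-6) (by omega) (le_refl _)
    have hstar : ∀ v : Fin n,
        ((deconState (SimpleGraph.cycleGraph n) 2 (rag n) (2*n-6)).1 v ↔
          v = ((2*n-5 : ℕ) : Fin n)) := by
      intro v
      obtain ⟨j, hj1, hj2, rfl⟩ := exists_rep ((2*n-6-1)/2) v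
      rw [(hkey j hj1 hj2).1]
      constructor
      · intro h
        rw [show j = 2*n-5 from by omega]
      · intro h
        have := window_inj hj1 hj2 (show (2*n-6-1)/2 ≤ 2*n-5 by omega)
          (show 2*n-5 < (2*n-6-1)/2 + n by omega) h
        omega
    intro v
    rw [show 2*n-5 = (2*n-6)+1 from by omega, dsf]
    rintro (⟨hc, hne⟩ | ⟨_, _, ⟨w, _, hcw, hnw⟩, _⟩)
    · apply hne
      rw [(hstar v).mp hc, rag_eq]
      exact congrArg _ (by omega)
    · apply hnw
      rw [(hstar w).mp hcw, rag_eq]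
      exact congrArg _ (by omega)

end ImmAux

/-- The cycle `C_n` (`n ≥ 4`) has immunity number `2`. -/
theorem immunity_cycleGraph (n : ℕ) (hn : 4 ≤ n) :
    iotaNum (SimpleGraph.cycleGraph n) = 2 := by
  have h2 := ImmAux.upper hn
  rw [iotaNum]
  refine le_antisymm (Nat.sInf_le h2) (le_csInf ⟨2, h2⟩ ?_)
  intro m hm
  by_contra h
  push_neg at h
  exact ImmAux.lower hn (by omega) hm
end

section
/- If S is a spider on n vertices, then the immunity number of S with one agent is O(√n); in particular ι(S) ≤ 4√n when the root degree is at most √n, and the bound O(√n) holds in general by first decontaminating the arms of length at least √n (of which there are at most √n) and then the remaining short arms monotonically. -/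
open scoped Classical

section cert

variable {V : Type*} (G : SimpleGraph V) (τ : ℕ) (agent : ℕ → V)

lemma deconState_succ_fst' (t : ℕ) :
    (deconState G τ agent (t+1)).1 = fun v =>
      ((deconState G τ agent t).1 v ∧ v ≠ agent (t+1)) ∨
      (v ≠ agent (t+1) ∧ ¬ (deconState G τ agent t).1 v ∧
        (∃ w, G.Adj v w ∧ ((deconState G τ agent t).1 w ∧ w ≠ agent (t+1))) ∧
        τ ≤ (deconState G τ agent t).2 v) := by
  conv_lhs => rw [deconState]

lemma deconState_succ_snd (t : ℕ) (v : V) :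
    (deconState G τ agent (t+1)).2 v =
      if (v = agent (t+1) ∨ (deconState G τ agent (t+1)).1 v ∨
          ¬ (∃ w, G.Adj v w ∧ (deconState G τ agent (t+1)).1 w)) then 0
      else (deconState G τ agent t).2 v + 1 := by
  simp only [deconState_succ_fst']
  conv_lhs => rw [deconState]

/-- reset condition at time `s` for vertex `v` with respect to certificate `E` -/
def Reset (E : ℕ → V → Prop) (agent : ℕ → V) (s : ℕ) (v : V) : Prop :=
  s = 0 ∨ agent s = v ∨ ∀ w, G.Adj v w → ¬ E s w

variable {E : ℕ → V → Prop}

lemma Xle (s : ℕ) (v : V)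
    (hinv : ∀ w, (deconState G τ agent s).1 w → E s w)
    (hr : Reset G E agent s v) :
    ∀ t, s ≤ t → (deconState G τ agent t).2 v ≤ t - s := by
  refine Nat.le_induction ?_ ?_
  · rcases hr with rfl | hv | hnb
    · simp [deconState]
    · cases s with
      | zero => simp [deconState]
      | succ u =>
        rw [deconState_succ_snd, if_pos (Or.inl hv.symm)]
        simp
    · cases s with
      | zero => simp [deconState]
      | succ u =>
        rw [deconState_succ_snd, if_pos (Or.inr (Or.inr ?_))]
        · simp
        · rintro ⟨w, hadj, hw⟩
          exact hnb w hadj (hinv w hw)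
  · intro t hst ih
    rw [deconState_succ_snd]
    split_ifs with h
    · omega
    · omega

lemma cert_main
    (hE0 : ∀ v, v ≠ agent 0 → E 0 v)
    (hkeep : ∀ t v, E t v → v ≠ agent (t+1) → E (t+1) v)
    (hexp : ∀ t v, ¬ E (t+1) v → v ≠ agent (t+1) →
      ∃ s, s ≤ t ∧ t < s + τ ∧ Reset G E agent s v) :
    ∀ t v, (deconState G τ agent t).1 v → E t v := by
  intro t
  induction t using Nat.strong_induction_on with
  | _ t IH =>
    cases t with
    | zero => intro v hv; exact hE0 v hv
    | succ t =>
      intro v hv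
      rw [deconState_succ_fst'] at hv
      rcases hv with ⟨hC, hne⟩ | ⟨hne, _, _, hX⟩
      · exact hkeep t v (IH t (Nat.lt_succ_self t) v hC) hne
      · by_contra hnE
        obtain ⟨s, hst, hlt, hr⟩ := hexp t v hnE hne
        have hXle := Xle G τ agent s v (IH s (Nat.lt_succ_of_le hst)) hr t hst
        omega

/-- main certificate criterion for `CanDecon` -/
lemma canDecon_of_certificate (E : ℕ → V → Prop) (T : ℕ)
    (hwalk : IsWalkStrategy G agent)
    (hE0 : ∀ v, v ≠ agent 0 → E 0 v)
    (hkeep : ∀ t v, E t v → v ≠ agent (t+1) → E (t+1) v)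
    (hexp : ∀ t v, ¬ E (t+1) v → v ≠ agent (t+1) →
      ∃ s, s ≤ t ∧ t < s + τ ∧ Reset G E agent s v)
    (hT : ∀ v, ¬ E T v) :
    CanDecon G τ := by
  refine ⟨agent, hwalk, T, fun v hv => hT v ?_⟩
  exact cert_main G τ agent hE0 hkeep hexp T v hv

end cert

section sched

variable {V : Type*} {k : ℕ}

/-- partial sums of `m` over indices `< j` -/
def Ms (m : Fin k → ℕ) (j : ℕ) : ℕ := ∑ i : Fin k, if (i:ℕ) < j then m i else 0

lemma Ms_mono (m : Fin k → ℕ) {a b : ℕ} (hab : a ≤ b) : Ms m a ≤ Ms m b := by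
  refine Finset.sum_le_sum fun i _ => ?_
  split_ifs with h1 h2 <;> omega

lemma Ms_succ (m : Fin k → ℕ) (i : Fin k) : Ms m ((i:ℕ)+1) = Ms m i + m i := by
  have key : ∀ x : Fin k, (if (x:ℕ) < (i:ℕ)+1 then m x else 0)
      = (if (x:ℕ) < (i:ℕ) then m x else 0) + (if x = i then m x else 0) := by
    intro x
    by_cases h : (x : ℕ) < (i : ℕ)
    · rw [if_pos (by omega), if_pos h, if_neg (fun he => by subst he; omega)]
      omega
    · by_cases h2 : x = i
      · subst h2; rw [if_pos (by omega), if_neg h, if_pos rfl]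
        omega
      · have hne : (x:ℕ) ≠ (i:ℕ) := fun hh => h2 (Fin.ext hh)
        rw [if_neg (by omega), if_neg h, if_neg h2]
  rw [Ms, Ms, Finset.sum_congr rfl (fun x _ => key x), Finset.sum_add_distrib]
  congr 1
  rw [Finset.sum_ite_eq' Finset.univ i m]
  simp

lemma Ms_zero (m : Fin k → ℕ) : Ms m 0 = 0 := by
  simp [Ms]

lemma Ms_top (m : Fin k → ℕ) : Ms m k = ∑ i, m i := by
  refine Finset.sum_congr rfl fun i _ => ?_
  rw [if_pos i.isLt]

lemma Ms_le_Ms {m m' : Fin k → ℕ} (h : ∀ i, m' i ≤ m i) (j : ℕ) : Ms m' j ≤ Ms m j := by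
  refine Finset.sum_le_sum fun i _ => ?_
  split_ifs
  · exact h i
  · exact le_refl 0

/-- start time of the stage-A trip of arm `j` -/
def BBa (m : Fin k → ℕ) (j : ℕ) : ℕ := 2 * Ms m j

/-- stage-B service depth of arm `i` -/
def dda (δ : ℕ) (m : Fin k → ℕ) (i : Fin k) : ℕ := min δ (m i)

/-- start time of the stage-B trip of arm `j` -/
def BBb (δ : ℕ) (m : Fin k → ℕ) (j : ℕ) : ℕ := BBa m k + 2 * Ms (fun i => dda δ m i) j

lemma BBa_mono (m : Fin k → ℕ) {a b : ℕ} (h : a ≤ b) : BBa m a ≤ BBa m b := by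
  have := Ms_mono m h; unfold BBa; omega

lemma BBa_succ (m : Fin k → ℕ) (i : Fin k) : BBa m ((i:ℕ)+1) = BBa m i + 2 * m i := by
  unfold BBa; rw [Ms_succ]; ring

lemma BBa_zero (m : Fin k → ℕ) : BBa m 0 = 0 := by unfold BBa; rw [Ms_zero]

lemma BBa_le_top (m : Fin k → ℕ) {j : ℕ} (h : j ≤ k) : BBa m j ≤ BBa m k := BBa_mono m h

lemma BBb_mono (δ : ℕ) (m : Fin k → ℕ) {a b : ℕ} (h : a ≤ b) : BBb δ m a ≤ BBb δ m b := by
  have := Ms_mono (fun i => dda δ m i) h; unfold BBb; omega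

lemma BBb_succ (δ : ℕ) (m : Fin k → ℕ) (i : Fin k) :
    BBb δ m ((i:ℕ)+1) = BBb δ m i + 2 * dda δ m i := by
  unfold BBb; rw [Ms_succ]; ring

lemma BBa_le_BBb (δ : ℕ) (m : Fin k → ℕ) (j : ℕ) : BBa m k ≤ BBb δ m j := by
  unfold BBb; omega

lemma Tend_le (δ : ℕ) (m : Fin k → ℕ) : BBb δ m k ≤ 4 * Ms m k := by
  have h1 : Ms (fun i => dda δ m i) k ≤ Ms m k := Ms_le_Ms (fun i => min_le_right _ _) k
  unfold BBb BBa; omega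

variable (r : V) (m : Fin k → ℕ) (arm : Fin k → ℕ → V) (τ δ : ℕ)

/-- the agent's walk -/
noncomputable def ag (t : ℕ) : V :=
  if hA : ∃ i : Fin k, BBa m i < t ∧ t < BBa m ((i:ℕ)+1) then
    arm hA.choose (min (t - BBa m hA.choose) (BBa m ((hA.choose:ℕ)+1) - t))
  else if hB : ∃ i : Fin k, BBb δ m i < t ∧ t < BBb δ m ((i:ℕ)+1) then
    arm hB.choose (min (t - BBb δ m hB.choose) (BBb δ m ((hB.choose:ℕ)+1) - t))
  else r

lemma winUA {t : ℕ} {i j : Fin k} (h1 : BBa m i < t) (h2 : t < BBa m ((i:ℕ)+1))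
    (h3 : BBa m j < t) (h4 : t < BBa m ((j:ℕ)+1)) : i = j := by
  rcases lt_trichotomy (i:ℕ) (j:ℕ) with h | h | h
  · have := BBa_mono m (show (i:ℕ)+1 ≤ (j:ℕ) from h)
    omega
  · exact Fin.ext h
  · have := BBa_mono m (show (j:ℕ)+1 ≤ (i:ℕ) from h)
    omega

lemma winUB {t : ℕ} {i j : Fin k} (h1 : BBb δ m i < t) (h2 : t < BBb δ m ((i:ℕ)+1))
    (h3 : BBb δ m j < t) (h4 : t < BBb δ m ((j:ℕ)+1)) : i = j := by
  rcases lt_trichotomy (i:ℕ) (j:ℕ) with h | h | h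
  · have := BBb_mono δ m (show (i:ℕ)+1 ≤ (j:ℕ) from h)
    omega
  · exact Fin.ext h
  · have := BBb_mono δ m (show (j:ℕ)+1 ≤ (i:ℕ) from h)
    omega

lemma ag_eq_A {t : ℕ} (i : Fin k) (h1 : BBa m i < t) (h2 : t < BBa m ((i:ℕ)+1)) :
    ag r m arm δ t = arm i (min (t - BBa m i) (BBa m ((i:ℕ)+1) - t)) := by
  have hA : ∃ i : Fin k, BBa m i < t ∧ t < BBa m ((i:ℕ)+1) := ⟨i, h1, h2⟩
  rw [ag, dif_pos hA]
  have hspec := hA.choose_spec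
  have heq : hA.choose = i := winUA m hspec.1 hspec.2 h1 h2
  rw [heq]

lemma noA_of_ge {t : ℕ} (h : BBa m k < t) : ¬ ∃ i : Fin k, BBa m i < t ∧ t < BBa m ((i:ℕ)+1) := by
  rintro ⟨j, hj1, hj2⟩
  have : BBa m ((j:ℕ)+1) ≤ BBa m k := BBa_le_top m j.isLt
  omega

lemma ag_eq_B {t : ℕ} (i : Fin k) (h1 : BBb δ m i < t) (h2 : t < BBb δ m ((i:ℕ)+1)) :
    ag r m arm δ t = arm i (min (t - BBb δ m i) (BBb δ m ((i:ℕ)+1) - t)) := by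
  have hB : ∃ i : Fin k, BBb δ m i < t ∧ t < BBb δ m ((i:ℕ)+1) := ⟨i, h1, h2⟩
  have hA : ¬ ∃ i : Fin k, BBa m i < t ∧ t < BBa m ((i:ℕ)+1) := by
    refine noA_of_ge m ?_
    have := BBa_le_BBb δ m i
    omega
  rw [ag, dif_neg hA, dif_pos hB]
  have hspec := hB.choose_spec
  have heq : hB.choose = i := winUB m δ hspec.1 hspec.2 h1 h2
  rw [heq]

lemma ag_eq_root {t : ℕ} (hA : ¬ ∃ i : Fin k, BBa m i < t ∧ t < BBa m ((i:ℕ)+1))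
    (hB : ¬ ∃ i : Fin k, BBb δ m i < t ∧ t < BBb δ m ((i:ℕ)+1)) :
    ag r m arm δ t = r := by
  rw [ag, dif_neg hA, dif_neg hB]

lemma ag_at_BBa {l : ℕ} (hl : l ≤ k) : ag r m arm δ (BBa m l) = r := by
  refine ag_eq_root r m arm δ ?_ ?_
  · rintro ⟨j, hj1, hj2⟩
    have hlt : (j:ℕ) < l := by
      by_contra hc
      have := BBa_mono m (show l ≤ (j:ℕ) by omega)
      omega
    have := BBa_mono m (show (j:ℕ)+1 ≤ l from hlt)
    omega
  · rintro ⟨j, hj1, hj2⟩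
    have h1 : BBa m l ≤ BBa m k := BBa_le_top m hl
    have := BBa_le_BBb δ m j
    omega

lemma ag_at_BBb {l : ℕ} (hl : l ≤ k) : ag r m arm δ (BBb δ m l) = r := by
  refine ag_eq_root r m arm δ ?_ ?_
  · rintro ⟨j, hj1, hj2⟩
    have h1 : BBa m ((j:ℕ)+1) ≤ BBa m k := BBa_le_top m j.isLt
    have := BBa_le_BBb δ m l
    omega
  · rintro ⟨j, hj1, hj2⟩
    have hlt : (j:ℕ) < l := by
      by_contra hc
      have := BBb_mono δ m (show l ≤ (j:ℕ) by omega)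
      omega
    have := BBb_mono δ m (show (j:ℕ)+1 ≤ l from hlt)
    omega

lemma ag_visit_A (i : Fin k) {c : ℕ} (h1 : 1 ≤ c) (h2 : c ≤ m i) :
    ag r m arm δ (BBa m i + c) = arm i c := by
  have hBB := BBa_succ m i
  rw [ag_eq_A r m arm δ i (by omega) (by omega)]
  congr 1
  omega

lemma ag_visit_B (i : Fin k) {c : ℕ} (h1 : 1 ≤ c) (h2 : c ≤ dda δ m i) :
    ag r m arm δ (BBb δ m i + c) = arm i c := by
  have hBB := BBb_succ δ m i
  rw [ag_eq_B r m arm δ i (by omega) (by omega)]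
  congr 1
  omega

end sched

section dyn

variable {V : Type*} {k : ℕ} (G : SimpleGraph V) (r : V) (m : Fin k → ℕ)
  (arm : Fin k → ℕ → V) (τ δ : ℕ)

/-- root part of the certificate -/
def rootE (t : ℕ) : Prop := ∃ i : Fin k, BBa m i + τ ≤ t ∧ t < BBa m ((i:ℕ)+1)

/-- arm part of the certificate -/
def armE (i : Fin k) (c t : ℕ) : Prop :=
  t < BBa m i + c ∨ (BBa m i + (c+1)*τ ≤ t ∧ t < BBb δ m i + c)

/-- the certificate: overestimate of the contaminated set -/
def Ecert (t : ℕ) (v : V) : Prop :=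
  (v = r ∧ rootE m τ t) ∨ ∃ i c, 1 ≤ c ∧ c ≤ m i ∧ v = arm i c ∧ armE m τ δ i c t

variable (hne : ∀ i c, 1 ≤ c → c ≤ m i → arm i c ≠ r)
variable (hinj : ∀ i c j c', 1 ≤ c → c ≤ m i → 1 ≤ c' → c' ≤ m j →
  arm i c = arm j c' → i = j ∧ c = c')

include hne hinj in
lemma Ecert_arm_iff (i : Fin k) {c : ℕ} (h1 : 1 ≤ c) (h2 : c ≤ m i) (t : ℕ) :
    Ecert r m arm τ δ t (arm i c) ↔ armE m τ δ i c t := by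
  constructor
  · rintro (⟨heq, _⟩ | ⟨j, c', hc1', hc2', heq, hA⟩)
    · exact absurd heq (hne i c h1 h2)
    · obtain ⟨hij, hcc⟩ := hinj j c' i c hc1' hc2' h1 h2 heq.symm
      subst hij; subst hcc; exact hA
  · intro h; exact Or.inr ⟨i, c, h1, h2, rfl, h⟩

include hne in
lemma Ecert_root_iff (t : ℕ) : Ecert r m arm τ δ t r ↔ rootE m τ t := by
  constructor
  · rintro (⟨_, h⟩ | ⟨j, c', h1, h2, heq, _⟩)
    · exact h
    · exact absurd heq.symm (hne j c' h1 h2)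
  · intro h; exact Or.inl ⟨rfl, h⟩

lemma rootE_lt_TA {t : ℕ} (h : rootE m τ t) : t < BBa m k := by
  obtain ⟨j, _, hj2⟩ := h
  have := BBa_le_top m (show (j:ℕ)+1 ≤ k from j.isLt)
  omega

lemma rootE_not_near (i : Fin k) {s : ℕ} (h1 : BBa m i ≤ s) (h2 : s < BBa m i + τ) :
    ¬ rootE m τ s := by
  rintro ⟨j, hj1, hj2⟩
  rcases le_or_gt (i:ℕ) (j:ℕ) with h | h
  · have := BBa_mono m h; omega
  · have := BBa_mono m (show (j:ℕ)+1 ≤ (i:ℕ) from h); omega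

variable (HC2n : 4 * Ms m k + δ + 1 ≤ (δ+2)*τ)

include HC2n in
lemma LC2 (hτ1 : 1 ≤ τ) (i : Fin k) {c : ℕ} (hc : δ + 1 ≤ c) :
    BBb δ m i + c ≤ BBa m i + (c+1)*τ := by
  have h1 : BBb δ m i ≤ BBb δ m k := BBb_mono δ m i.isLt.le
  have h2 := Tend_le δ m
  have key : ∀ c', δ + 1 ≤ c' → 4 * Ms m k + c' ≤ (c'+1)*τ := by
    refine Nat.le_induction ?_ ?_
    · have : (δ+1+1)*τ = (δ+2)*τ := by ring
      omega
    · intro c' _ ih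
      have : (c'+1+1)*τ = (c'+1)*τ + τ := by ring
      omega
  have := key c hc
  have : BBa m i ≥ 0 := Nat.zero_le _
  omega

lemma delta_lt_of (i : Fin k) {c : ℕ} (h2 : c ≤ m i) (h : dda δ m i < c) : δ + 1 ≤ c := by
  rcases min_lt_iff.mp (show min δ (m i) < c from h) with h' | h' <;> omega

variable (hnbr : ∀ i c w, 1 ≤ c → c ≤ m i → G.Adj (arm i c) w →
  (c = 1 ∧ w = r) ∨ (∃ c', c = c' + 1 ∧ 1 ≤ c' ∧ w = arm i c') ∨ (c + 1 ≤ m i ∧ w = arm i (c+1)))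

include hne hinj hnbr in
lemma nbrs_clear (i : Fin k) {c s : ℕ} (h1 : 1 ≤ c) (h2 : c ≤ m i)
    (hs1 : BBa m i + c < s) (hs2 : s < BBa m i + c * τ) :
    ∀ w, G.Adj (arm i c) w → ¬ Ecert r m arm τ δ s w := by
  intro w hadj hEw
  rcases hnbr i c w h1 h2 hadj with ⟨hc, hw⟩ | ⟨c', hceq, hc1', rfl⟩ | ⟨hcm, rfl⟩
  · rw [hw, Ecert_root_iff r m arm τ δ hne] at hEw
    subst hc
    exact rootE_not_near m τ i (by omega) (by omega) hEw
  · have hc2' : c' ≤ m i := by omega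
    rw [Ecert_arm_iff r m arm τ δ hne hinj i hc1' hc2'] at hEw
    rcases hEw with h | ⟨ha, _⟩
    · omega
    · have : (c'+1) = c := by omega
      rw [this] at ha
      omega
  · rw [Ecert_arm_iff r m arm τ δ hne hinj i (by omega) hcm] at hEw
    rcases hEw with h | ⟨ha, _⟩
    · omega
    · have : c * τ ≤ (c+1+1)*τ := Nat.mul_le_mul_right τ (by omega)
      omega

include hne hinj hnbr HC2n in
lemma nbrs_clear_post (hτ2 : 2 ≤ τ) (i : Fin k) {c s : ℕ} (h1 : 1 ≤ c) (h2 : c ≤ m i)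
    (hA : BBa m i + (c+1)*τ ≤ s + 1) (hB : BBb δ m i + c ≤ s + 1)
    (hC : BBb δ m i + c < s ∨ dda δ m i < c) :
    ∀ w, G.Adj (arm i c) w → ¬ Ecert r m arm τ δ s w := by
  have hmul1 : c + 2 ≤ (c+1)*τ := by
    have : (c+1)*2 ≤ (c+1)*τ := Nat.mul_le_mul_left _ hτ2
    omega
  intro w hadj hEw
  rcases hnbr i c w h1 h2 hadj with ⟨hc, hw⟩ | ⟨c', hceq, hc1', rfl⟩ | ⟨hcm, rfl⟩
  · rw [hw, Ecert_root_iff r m arm τ δ hne] at hEw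
    have h5 := rootE_lt_TA m τ hEw
    have h6 := BBa_le_BBb δ m i
    omega
  · have hc2' : c' ≤ m i := by omega
    rw [Ecert_arm_iff r m arm τ δ hne hinj i hc1' hc2'] at hEw
    rcases hEw with h | ⟨_, hb⟩
    · omega
    · omega
  · rw [Ecert_arm_iff r m arm τ δ hne hinj i (by omega) hcm] at hEw
    rcases hEw with h | ⟨ha, hb⟩
    · omega
    · rcases hC with hC | hC
      · omega
      · have hδc : δ + 1 ≤ c := delta_lt_of m δ i h2 hC
        have := LC2 m τ δ HC2n (by omega) i (show δ + 1 ≤ c + 1 by omega)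
        omega

end dyn

section dyn2

variable {V : Type*} {k : ℕ} (G : SimpleGraph V) (r : V) (m : Fin k → ℕ)
  (arm : Fin k → ℕ → V) (τ δ : ℕ)
variable (hne : ∀ i c, 1 ≤ c → c ≤ m i → arm i c ≠ r)
variable (hinj : ∀ i c j c', 1 ≤ c → c ≤ m i → 1 ≤ c' → c' ≤ m j →
  arm i c = arm j c' → i = j ∧ c = c')
variable (HC2n : 4 * Ms m k + δ + 1 ≤ (δ+2)*τ)
variable (hnbr : ∀ i c w, 1 ≤ c → c ≤ m i → G.Adj (arm i c) w →
  (c = 1 ∧ w = r) ∨ (∃ c', c = c' + 1 ∧ 1 ≤ c' ∧ w = arm i c') ∨ (c + 1 ≤ m i ∧ w = arm i (c+1)))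
variable (hsurj : ∀ v, v ≠ r → ∃ i c, 1 ≤ c ∧ c ≤ m i ∧ arm i c = v)
variable (hadjr : ∀ i, G.Adj r (arm i 1))
variable (hadja : ∀ i c, 1 ≤ c → c + 1 ≤ m i → G.Adj (arm i c) (arm i (c+1)))
variable (Hm : ∀ i, 1 ≤ m i)
variable (Hτ8 : 8 ≤ τ) (Hτδ : 2*δ + 1 ≤ τ) (Hδ : 1 ≤ δ)

include hne hinj HC2n Hτ8 in
lemma sched_keep : ∀ t v, Ecert r m arm τ δ t v → v ≠ ag r m arm δ (t+1) →
    Ecert r m arm τ δ (t+1) v := by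
  intro t v hE hnp
  rcases hE with ⟨hveq, i, hi1, hi2⟩ | ⟨i, c, hc1, hc2, rfl, hA⟩
  · subst v
    by_cases h : t + 1 < BBa m ((i:ℕ)+1)
    · exact Or.inl ⟨rfl, i, by omega, h⟩
    · exfalso
      apply hnp
      have ht1 : t + 1 = BBa m ((i:ℕ)+1) := by omega
      rw [ht1, ag_at_BBa r m arm δ (show (i:ℕ)+1 ≤ k from i.isLt)]
  · refine Or.inr ⟨i, c, hc1, hc2, rfl, ?_⟩
    rcases hA with h | ⟨ha, hb⟩
    · by_cases h2 : t + 1 < BBa m i + c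
      · exact Or.inl h2
      · exfalso
        apply hnp
        have ht1 : t + 1 = BBa m i + c := by omega
        rw [ht1, ag_visit_A r m arm δ i hc1 hc2]
    · by_cases h2 : t + 1 < BBb δ m i + c
      · exact Or.inr ⟨by omega, h2⟩
      · have ht1 : t + 1 = BBb δ m i + c := by omega
        by_cases hcd : c ≤ dda δ m i
        · exfalso
          apply hnp
          rw [ht1, ag_visit_B r m arm δ i hc1 hcd]
        · exfalso
          have hδc : δ + 1 ≤ c := delta_lt_of m δ i hc2 (by omega)
          have := LC2 m τ δ HC2n (by omega) i hδc
          omega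

include hsurj in
lemma sched_E0 : ∀ v, v ≠ ag r m arm δ 0 → Ecert r m arm τ δ 0 v := by
  have h0 : ag r m arm δ 0 = r := by
    have h := ag_at_BBa r m arm δ (show 0 ≤ k by omega)
    rw [BBa_zero] at h
    exact h
  intro v hv
  rw [h0] at hv
  obtain ⟨i, c, hc1, hc2, rfl⟩ := hsurj v hv
  exact Or.inr ⟨i, c, hc1, hc2, rfl, Or.inl (by omega)⟩

include hne hinj HC2n Hτ8 in
lemma sched_T : ∀ v, ¬ Ecert r m arm τ δ (BBb δ m k) v := by
  intro v hE
  rcases hE with ⟨hveq, hr⟩ | ⟨i, c, hc1, hc2, heq, hA⟩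
  · have h1 := rootE_lt_TA m τ hr
    have h2 := BBa_le_BBb δ m k
    omega
  · rcases hA with h | ⟨ha, hb⟩
    · have h1 := BBa_succ m i
      have h2 : BBa m ((i:ℕ)+1) ≤ BBa m k := BBa_le_top m (show (i:ℕ)+1 ≤ k from i.isLt)
      have h3 := BBa_le_BBb δ m k
      omega
    · by_cases hcd : c ≤ dda δ m i
      · have h1 := BBb_succ δ m i
        have h2 : BBb δ m ((i:ℕ)+1) ≤ BBb δ m k := BBb_mono δ m (show (i:ℕ)+1 ≤ k from i.isLt)
        have h3 : 1 ≤ dda δ m i := by omega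
        omega
      · have hδc : δ + 1 ≤ c := delta_lt_of m δ i hc2 (by omega)
        have := LC2 m τ δ HC2n (by omega) i hδc
        omega

include hne hinj HC2n hnbr hsurj Hτ8 Hτδ in
lemma sched_exp : ∀ t v, ¬ Ecert r m arm τ δ (t+1) v → v ≠ ag r m arm δ (t+1) →
    ∃ s, s ≤ t ∧ t < s + τ ∧
      (s = 0 ∨ ag r m arm δ s = v ∨ ∀ w, G.Adj v w → ¬ Ecert r m arm τ δ s w) := by
  intro t v hnE hnp
  by_cases hv : v = r
  · subst v
    rcases em (∃ i : Fin k, BBa m i < t+1 ∧ t+1 < BBa m ((i:ℕ)+1)) with ⟨i, h1, h2⟩ | hA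
    · have hτle : ¬ (BBa m i + τ ≤ t+1) := fun hcon => hnE (Or.inl ⟨rfl, i, hcon, h2⟩)
      exact ⟨BBa m i, by omega, by omega,
        Or.inr (Or.inl (ag_at_BBa r m arm δ (show (i:ℕ) ≤ k from i.isLt.le)))⟩
    · rcases em (∃ i : Fin k, BBb δ m i < t+1 ∧ t+1 < BBb δ m ((i:ℕ)+1)) with ⟨i, h1, h2⟩ | hB
      · have hw := BBb_succ δ m i
        have hdd : dda δ m i ≤ δ := min_le_left _ _
        exact ⟨BBb δ m i, by omega, by omega,
          Or.inr (Or.inl (ag_at_BBb r m arm δ (show (i:ℕ) ≤ k from i.isLt.le)))⟩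
      · exact absurd (ag_eq_root r m arm δ hA hB).symm hnp
  · obtain ⟨i, c, hc1, hc2, rfl⟩ := hsurj v hv
    rw [Ecert_arm_iff r m arm τ δ hne hinj i hc1 hc2] at hnE
    simp only [armE, not_or, not_and, not_lt] at hnE
    obtain ⟨hnE1, hnE2⟩ := hnE
    by_cases hvis : t + 1 = BBa m i + c
    · exfalso; apply hnp; rw [hvis, ag_visit_A r m arm δ i hc1 hc2]
    · have hct : BBa m i + c ≤ t := by omega
      have hcτ2 : c + 2 ≤ c * τ := by
        have : c * 3 ≤ c * τ := Nat.mul_le_mul_left c (by omega)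
        omega
      by_cases hθ : t < BBa m i + c * τ
      · by_cases hvt : t = BBa m i + c
        · exact ⟨t, le_refl t, by omega,
            Or.inr (Or.inl (by rw [hvt]; exact ag_visit_A r m arm δ i hc1 hc2))⟩
        · exact ⟨t, le_refl t, by omega, Or.inr (Or.inr
            (nbrs_clear G r m arm τ δ hne hinj hnbr i hc1 hc2 (by omega) hθ))⟩
      · have hmul3 : c*τ + τ = (c+1)*τ := by ring
        by_cases hT2 : t + 1 < BBa m i + (c+1)*τ
        · exact ⟨BBa m i + c*τ - 1, by omega, by omega, Or.inr (Or.inr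
            (nbrs_clear G r m arm τ δ hne hinj hnbr i hc1 hc2 (by omega) (by omega)))⟩
        · have h3 : BBb δ m i + c ≤ t + 1 := hnE2 (by omega)
          by_cases hvis2 : t + 1 = BBb δ m i + c
          · by_cases hcd : c ≤ dda δ m i
            · exfalso; apply hnp; rw [hvis2, ag_visit_B r m arm δ i hc1 hcd]
            · exact ⟨t, le_refl t, by omega, Or.inr (Or.inr
                (nbrs_clear_post G r m arm τ δ hne hinj HC2n hnbr (by omega) i hc1 hc2
                  (by omega) (by omega) (Or.inr (by omega))))⟩
          · have h4 : BBb δ m i + c ≤ t := by omega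
            by_cases hvis3 : t = BBb δ m i + c ∧ c ≤ dda δ m i
            · exact ⟨t, le_refl t, by omega, Or.inr (Or.inl
                (by rw [hvis3.1]; exact ag_visit_B r m arm δ i hc1 hvis3.2))⟩
            · have hC : BBb δ m i + c < t ∨ dda δ m i < c := by
                rcases not_and_or.mp hvis3 with h | h
                · exact Or.inl (by omega)
                · exact Or.inr (by omega)
              exact ⟨t, le_refl t, by omega, Or.inr (Or.inr
                (nbrs_clear_post G r m arm τ δ hne hinj HC2n hnbr (by omega) i hc1 hc2
                  (by omega) (by omega) hC))⟩

end dyn2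

section walk

variable {V : Type*} {k : ℕ} (G : SimpleGraph V) (r : V) (m : Fin k → ℕ)
  (arm : Fin k → ℕ → V) (τ δ : ℕ)
variable (hadjr : ∀ i, G.Adj r (arm i 1))
variable (hadja : ∀ i c, 1 ≤ c → c + 1 ≤ m i → G.Adj (arm i c) (arm i (c+1)))
variable (Hm : ∀ i, 1 ≤ m i) (Hδ : 1 ≤ δ)

include hadjr hadja Hm Hδ in
lemma sched_walk : ∀ t, ag r m arm δ (t+1) = ag r m arm δ t ∨
    G.Adj (ag r m arm δ t) (ag r m arm δ (t+1)) := by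
  intro t
  rcases em (∃ i : Fin k, BBa m i < t+1 ∧ t+1 < BBa m ((i:ℕ)+1)) with ⟨i, h1, h2⟩ | hA
  · have hs := BBa_succ m i
    rw [ag_eq_A r m arm δ i h1 h2]
    by_cases ht : BBa m i < t
    · rw [ag_eq_A r m arm δ i ht (by omega)]
      have e1 : t + 1 - BBa m i = (t - BBa m i) + 1 := by omega
      have e2 : BBa m ((i:ℕ)+1) - (t+1) = 2 * m i - ((t - BBa m i) + 1) := by omega
      have e4 : BBa m ((i:ℕ)+1) - t = 2 * m i - (t - BBa m i) := by omega
      rw [e1, e2, e4]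
      set u := t - BBa m i with hu
      have hu1 : 1 ≤ u := by omega
      have hu2 : u + 1 < 2 * m i := by omega
      rcases lt_trichotomy u (m i) with hum | hum | hum
      · have q1 : min u (2 * m i - u) = u := Nat.min_eq_left (by omega)
        have q2 : min (u+1) (2 * m i - (u+1)) = u + 1 := Nat.min_eq_left (by omega)
        rw [q1, q2]
        exact Or.inr (hadja i u hu1 (by omega))
      · have hm2 : 2 ≤ m i := by omega
        have q1 : min u (2 * m i - u) = u := Nat.min_eq_left (by omega)
        have q2 : min (u+1) (2 * m i - (u+1)) = u - 1 := by
          rw [Nat.min_eq_right (by omega)]; omega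
        rw [q1, q2]
        have had := hadja i (u-1) (by omega) (by omega)
        have e : u - 1 + 1 = u := by omega
        rw [e] at had
        exact Or.inr had.symm
      · have q1 : min u (2 * m i - u) = 2 * m i - u := Nat.min_eq_right (by omega)
        have q2 : min (u+1) (2 * m i - (u+1)) = 2 * m i - (u+1) := Nat.min_eq_right (by omega)
        rw [q1, q2]
        have had := hadja i (2*m i - (u+1)) (by omega) (by omega)
        have e : 2*m i - (u+1) + 1 = 2*m i - u := by omega
        rw [e] at had
        exact Or.inr had.symm
    · have ht' : t = BBa m i := by omega
      have hr0 : ag r m arm δ t = r := by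
        rw [ht']; exact ag_at_BBa r m arm δ (show (i:ℕ) ≤ k from i.isLt.le)
      rw [hr0]
      have e1 : t + 1 - BBa m i = 1 := by omega
      have hm1 := Hm i
      rw [e1, Nat.min_eq_left (by omega)]
      exact Or.inr (hadjr i)
  · rcases em (∃ i : Fin k, BBb δ m i < t+1 ∧ t+1 < BBb δ m ((i:ℕ)+1)) with ⟨i, h1, h2⟩ | hB
    · have hs := BBb_succ δ m i
      have hdm : dda δ m i ≤ m i := min_le_right _ _
      have hd1 : 1 ≤ dda δ m i := by
        have := Hm i
        simp only [dda]
        omega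
      rw [ag_eq_B r m arm δ i h1 h2]
      by_cases ht : BBb δ m i < t
      · rw [ag_eq_B r m arm δ i ht (by omega)]
        have e1 : t + 1 - BBb δ m i = (t - BBb δ m i) + 1 := by omega
        have e2 : BBb δ m ((i:ℕ)+1) - (t+1) = 2 * dda δ m i - ((t - BBb δ m i) + 1) := by omega
        have e4 : BBb δ m ((i:ℕ)+1) - t = 2 * dda δ m i - (t - BBb δ m i) := by omega
        rw [e1, e2, e4]
        set u := t - BBb δ m i with hu
        have hu1 : 1 ≤ u := by omega
        have hu2 : u + 1 < 2 * dda δ m i := by omega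
        rcases lt_trichotomy u (dda δ m i) with hum | hum | hum
        · have q1 : min u (2 * dda δ m i - u) = u := Nat.min_eq_left (by omega)
          have q2 : min (u+1) (2 * dda δ m i - (u+1)) = u + 1 := Nat.min_eq_left (by omega)
          rw [q1, q2]
          exact Or.inr (hadja i u hu1 (by omega))
        · have q1 : min u (2 * dda δ m i - u) = u := Nat.min_eq_left (by omega)
          have q2 : min (u+1) (2 * dda δ m i - (u+1)) = u - 1 := by
            rw [Nat.min_eq_right (by omega)]; omega
          rw [q1, q2]
          have had := hadja i (u-1) (by omega) (by omega)
          have e : u - 1 + 1 = u := by omega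
          rw [e] at had
          exact Or.inr had.symm
        · have q1 : min u (2 * dda δ m i - u) = 2 * dda δ m i - u := Nat.min_eq_right (by omega)
          have q2 : min (u+1) (2 * dda δ m i - (u+1)) = 2 * dda δ m i - (u+1) :=
            Nat.min_eq_right (by omega)
          rw [q1, q2]
          have had := hadja i (2*dda δ m i - (u+1)) (by omega) (by omega)
          have e : 2*dda δ m i - (u+1) + 1 = 2*dda δ m i - u := by omega
          rw [e] at had
          exact Or.inr had.symm
      · have ht' : t = BBb δ m i := by omega
        have hr0 : ag r m arm δ t = r := by
          rw [ht']; exact ag_at_BBb r m arm δ (show (i:ℕ) ≤ k from i.isLt.le)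
        rw [hr0]
        have e1 : t + 1 - BBb δ m i = 1 := by omega
        rw [e1, Nat.min_eq_left (by omega)]
        exact Or.inr (hadjr i)
    · rw [ag_eq_root r m arm δ hA hB]
      rcases em (∃ i : Fin k, BBa m i < t ∧ t < BBa m ((i:ℕ)+1)) with ⟨i, h1, h2⟩ | hA'
      · have hs := BBa_succ m i
        have ht1 : t + 1 = BBa m ((i:ℕ)+1) := by
          by_contra hc
          exact hA ⟨i, by omega, by omega⟩
        rw [ag_eq_A r m arm δ i h1 h2]
        have hm1 := Hm i
        have e0 : BBa m ((i:ℕ)+1) - t = 1 := by omega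
        rw [e0, Nat.min_eq_right (by omega)]
        exact Or.inr (hadjr i).symm
      · rcases em (∃ i : Fin k, BBb δ m i < t ∧ t < BBb δ m ((i:ℕ)+1)) with ⟨i, h1, h2⟩ | hB'
        · have hs := BBb_succ δ m i
          have hdm : dda δ m i ≤ m i := min_le_right _ _
          have hd1 : 1 ≤ dda δ m i := by
            have := Hm i
            simp only [dda]
            omega
          have ht1 : t + 1 = BBb δ m ((i:ℕ)+1) := by
            by_contra hc
            exact hB ⟨i, by omega, by omega⟩
          rw [ag_eq_B r m arm δ i h1 h2]
          have e0 : BBb δ m ((i:ℕ)+1) - t = 1 := by omega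
          rw [e0, Nat.min_eq_right (by omega)]
          exact Or.inr (hadjr i).symm
        · rw [ag_eq_root r m arm δ hA' hB']
          exact Or.inl rfl

end walk

section struct

open SimpleGraph


variable {V : Type} [Fintype V] {G : SimpleGraph V}

/-- the chosen path from `r` to `v` in a tree -/
noncomputable def pathTo (hG : G.IsTree) (r v : V) : G.Walk r v :=
  (hG.existsUnique_path r v).choose

lemma pathTo_isPath (hG : G.IsTree) (r v : V) : (pathTo hG r v).IsPath :=
  (hG.existsUnique_path r v).choose_spec.1

lemma pathTo_unique (hG : G.IsTree) (r v : V) (p : G.Walk r v) (hp : p.IsPath) :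
    p = pathTo hG r v :=
  (hG.existsUnique_path r v).choose_spec.2 p hp

/-- depth of `v` -/
noncomputable def depthV (hG : G.IsTree) (r v : V) : ℕ := (pathTo hG r v).length

/-- first vertex after `r` on the path to `v` -/
noncomputable def headV (hG : G.IsTree) (r v : V) : V := (pathTo hG r v).getVert 1

/-- the parent of `v` (vertex before `v` on the path) -/
noncomputable def parV (hG : G.IsTree) (r v : V) : V :=
  (pathTo hG r v).getVert (depthV hG r v - 1)

lemma depthV_r (hG : G.IsTree) (r : V) : depthV hG r r = 0 := by
  have h := pathTo_unique hG r r Walk.nil Walk.IsPath.nil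
  unfold depthV
  rw [← h]
  rfl

lemma eq_r_of_depthV_zero (hG : G.IsTree) (r v : V) (h : depthV hG r v = 0) : v = r :=
  (Walk.eq_of_length_eq_zero h).symm

lemma depthV_pos (hG : G.IsTree) (r v : V) (hv : v ≠ r) : 1 ≤ depthV hG r v := by
  by_contra h
  exact hv (eq_r_of_depthV_zero hG r v (by omega))

lemma walk_rear_decomp {u v : V} (p : G.Walk u v) (h : u ≠ v) :
    ∃ (x : V) (q : G.Walk u x) (hadj : G.Adj x v), p = q.concat hadj := by
  cases p with
  | nil => exact absurd rfl h
  | cons hadj q =>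
    obtain ⟨x, q', h', heq⟩ := Walk.exists_cons_eq_concat hadj q
    exact ⟨x, q', h', heq⟩

lemma IsPath.of_concat' {u x v : V} {q : G.Walk u x} {h : G.Adj x v}
    (hp : (q.concat h).IsPath) : q.IsPath := by
  have h1 := hp.reverse
  rw [Walk.reverse_concat] at h1
  have h2 := h1.of_cons.reverse
  rwa [Walk.reverse_reverse] at h2

lemma getVert_concat_last {u x v : V} (q : G.Walk u x) (h : G.Adj x v) :
    (q.concat h).getVert q.length = x := by
  rw [Walk.concat_eq_append, Walk.getVert_append]
  simp

/-- rear decomposition of the chosen path -/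
lemma parent_decomp (hG : G.IsTree) (r v : V) (hv : v ≠ r) :
    ∃ (u : V) (hadj : G.Adj u v), pathTo hG r v = (pathTo hG r u).concat hadj := by
  obtain ⟨x, q, hadj, heq⟩ := walk_rear_decomp (pathTo hG r v) (Ne.symm hv)
  have hq : q.IsPath := IsPath.of_concat' (heq ▸ pathTo_isPath hG r v)
  refine ⟨x, hadj, ?_⟩
  rw [heq, pathTo_unique hG r x q hq]

lemma parV_of_decomp (hG : G.IsTree) (r v : V) {u : V} {hadj : G.Adj u v}
    (heq : pathTo hG r v = (pathTo hG r u).concat hadj) : parV hG r v = u := by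
  have hlen : depthV hG r v = depthV hG r u + 1 := by
    unfold depthV
    rw [heq, Walk.length_concat]
  unfold parV
  rw [heq, hlen]
  have : depthV hG r u + 1 - 1 = (pathTo hG r u).length := rfl
  rw [this, getVert_concat_last]

lemma parV_spec (hG : G.IsTree) (r v : V) (hv : v ≠ r) :
    G.Adj (parV hG r v) v ∧ depthV hG r v = depthV hG r (parV hG r v) + 1 ∧
      ∃ (hadj : G.Adj (parV hG r v) v),
        pathTo hG r v = (pathTo hG r (parV hG r v)).concat hadj := by
  obtain ⟨u, hadj, heq⟩ := parent_decomp hG r v hv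
  have hu := parV_of_decomp hG r v heq
  subst hu
  refine ⟨hadj, ?_, hadj, heq⟩
  unfold depthV
  rw [heq, Walk.length_concat]

lemma headV_adj (hG : G.IsTree) (r v : V) (hv : v ≠ r) : G.Adj r (headV hG r v) := by
  have hlen : 1 ≤ (pathTo hG r v).length := depthV_pos hG r v hv
  have h := Walk.adj_getVert_succ (pathTo hG r v) (i := 0) (by omega)
  rwa [Walk.getVert_zero] at h

lemma headV_eq_self (hG : G.IsTree) (r v : V) (h : depthV hG r v = 1) : headV hG r v = v := by
  unfold headV
  have : (1:ℕ) = (pathTo hG r v).length := h.symm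
  rw [this, Walk.getVert_length]

lemma depthV_one_of_adj (hG : G.IsTree) (r x : V) (h : G.Adj r x) : depthV hG r x = 1 := by
  have hpath : (Walk.cons h Walk.nil : G.Walk r x).IsPath := by
    refine Walk.IsPath.nil.cons ?_
    simp [h.ne]
  have := pathTo_unique hG r x _ hpath
  unfold depthV
  rw [← this]
  rfl

lemma headV_par (hG : G.IsTree) (r v : V) (hv : v ≠ r) (hp : parV hG r v ≠ r) :
    headV hG r (parV hG r v) = headV hG r v := by
  obtain ⟨hadj, hd, hadj', heq⟩ := parV_spec hG r v hv
  set u := parV hG r v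
  have hlen : 1 ≤ (pathTo hG r u).length := depthV_pos hG r u hp
  unfold headV
  rw [heq, Walk.concat_eq_append, Walk.getVert_append]
  by_cases h1 : 1 < (pathTo hG r u).length
  · rw [if_pos h1]
  · have hlen1 : (pathTo hG r u).length = 1 := by omega
    rw [if_neg h1]
    have e : 1 - (pathTo hG r u).length = 0 := by omega
    rw [e, Walk.getVert_zero]
    -- goal : u = (pathTo hG r u).getVert 1  (as headV u)
    have := headV_eq_self hG r u (show depthV hG r u = 1 from hlen1)
    unfold headV at this
    exact this

/-- dichotomy for adjacent vertices in a tree -/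
lemma adj_dichotomy (hG : G.IsTree) (r : V) {u v : V} (h : G.Adj u v) :
    (∃ (hadj : G.Adj u v), pathTo hG r v = (pathTo hG r u).concat hadj) ∨
    (∃ (hadj : G.Adj v u), pathTo hG r u = (pathTo hG r v).concat hadj) := by
  by_cases hmem : v ∈ (pathTo hG r u).support
  · right
    have hpath := pathTo_isPath hG r u
    have htake := hpath.takeUntil hmem
    have hdrop := hpath.dropUntil hmem
    have hedge : (Walk.cons (h.symm) Walk.nil : G.Walk v u).IsPath := by
      refine Walk.IsPath.nil.cons ?_
      simp [h.ne']
    obtain ⟨pp, hpp, hun⟩ := hG.existsUnique_path v u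
    have hde : (pathTo hG r u).dropUntil v hmem = Walk.cons (h.symm) Walk.nil := by
      rw [hun _ hdrop, hun _ hedge]
    refine ⟨h.symm, ?_⟩
    have hsp := Walk.take_spec (pathTo hG r u) hmem
    have htake_eq := pathTo_unique hG r v _ htake
    calc pathTo hG r u = ((pathTo hG r u).takeUntil v hmem).append
          ((pathTo hG r u).dropUntil v hmem) := hsp.symm
      _ = ((pathTo hG r u).takeUntil v hmem).append (Walk.cons (h.symm) Walk.nil) := by
          rw [hde]
      _ = ((pathTo hG r u).takeUntil v hmem).concat (h.symm) :=
          (Walk.concat_eq_append _ _).symm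
      _ = (pathTo hG r v).concat (h.symm) := by rw [← htake_eq]
  · left
    refine ⟨h, ?_⟩
    have hcons : (Walk.cons h.symm (pathTo hG r u).reverse).IsPath := by
      refine (pathTo_isPath hG r u).reverse.cons ?_
      rw [Walk.support_reverse]
      simpa using hmem
    have h2 := hcons.reverse
    rw [Walk.reverse_cons, Walk.reverse_reverse] at h2
    exact (pathTo_unique hG r v _ h2).symm

lemma adj_depthV (hG : G.IsTree) (r : V) {u v : V} (h : G.Adj u v) :
    depthV hG r v = depthV hG r u + 1 ∨ depthV hG r u = depthV hG r v + 1 := by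
  rcases adj_dichotomy hG r h with ⟨hadj, heq⟩ | ⟨hadj, heq⟩
  · left; unfold depthV; rw [heq, Walk.length_concat]
  · right; unfold depthV; rw [heq, Walk.length_concat]

lemma parV_of_adj (hG : G.IsTree) (r : V) {u v : V} (h : G.Adj u v)
    (hd : depthV hG r v = depthV hG r u + 1) : parV hG r v = u := by
  rcases adj_dichotomy hG r h with ⟨hadj, heq⟩ | ⟨hadj, heq⟩
  · exact parV_of_decomp hG r v heq
  · exfalso
    have : depthV hG r u = depthV hG r v + 1 := by
      unfold depthV; rw [heq, Walk.length_concat]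
    omega

variable (hG : G.IsTree) (r : V)

lemma child_unique (h23 : ∀ x, x ≠ r → (G.neighborSet x).ncard ≤ 2)
    {u v w : V} (hu : u ≠ r) (hv : G.Adj u v) (hw : G.Adj u w)
    (hdv : depthV hG r v = depthV hG r u + 1) (hdw : depthV hG r w = depthV hG r u + 1) :
    v = w := by
  by_contra hne
  obtain ⟨hpadj, hpd, _⟩ := parV_spec hG r u hu
  set pu := parV hG r u with hpu
  have h1 : pu ≠ v := by
    intro h
    rw [h] at hpd
    omega
  have h2 : pu ≠ w := by
    intro h
    rw [h] at hpd
    omega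
  have hsub : ({pu, v, w} : Set V) ⊆ G.neighborSet u := by
    intro x hx
    rcases hx with h | h | h
    · subst h; exact hpadj.symm
    · subst h; exact hv
    · subst h; exact hw
  have hcard : ({pu, v, w} : Set V).ncard = 3 := by
    rw [Set.ncard_insert_of_notMem (by simp [h1, h2]) (Set.toFinite _), Set.ncard_pair hne]
  have hle := Set.ncard_le_ncard hsub (Set.toFinite _)
  have := h23 u hu
  omega

lemma same_arm_unique (h23 : ∀ x, x ≠ r → (G.neighborSet x).ncard ≤ 2) :
    ∀ c, ∀ v w, v ≠ r → w ≠ r → headV hG r v = headV hG r w →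
      depthV hG r v = c → depthV hG r w = c → v = w := by
  intro c
  induction c using Nat.strong_induction_on with
  | _ c IH =>
    intro v w hv hw hh hdv hdw
    match c, hdv, hdw with
    | 0, hdv, hdw => exact absurd (eq_r_of_depthV_zero hG r v hdv) hv
    | 1, hdv, hdw =>
      rw [← headV_eq_self hG r v hdv, hh, headV_eq_self hG r w hdw]
    | (c'+2), hdv, hdw =>
      obtain ⟨hadv, hddv, _⟩ := parV_spec hG r v hv
      obtain ⟨hadw, hddw, _⟩ := parV_spec hG r w hw
      have hdpv : depthV hG r (parV hG r v) = c' + 1 := by omega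
      have hdpw : depthV hG r (parV hG r w) = c' + 1 := by omega
      have hpv : parV hG r v ≠ r := by
        intro h
        rw [h, depthV_r] at hdpv
        omega
      have hpw : parV hG r w ≠ r := by
        intro h
        rw [h, depthV_r] at hdpw
        omega
      have hhp : headV hG r (parV hG r v) = headV hG r (parV hG r w) := by
        rw [headV_par hG r v hv hpv, headV_par hG r w hw hpw, hh]
      have heqp : parV hG r v = parV hG r w :=
        IH (c'+1) (by omega) _ _ hpv hpw hhp hdpv hdpw
      exact child_unique hG r h23 hpv hadv (heqp ▸ hadw) (by omega) (by omega)


/-- length of the arm through neighbour `x` of the root -/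
noncomputable def armLenV (x : V) : ℕ :=
  Finset.sup (Finset.univ.filter (fun w => w ≠ r ∧ headV hG r w = x)) (depthV hG r)

lemma le_armLenV {v x : V} (hv : v ≠ r) (hh : headV hG r v = x) :
    depthV hG r v ≤ armLenV hG r x :=
  Finset.le_sup (by simp [hv, hh])

lemma armLenV_pos {x : V} (hx : G.Adj r x) : 1 ≤ armLenV hG r x := by
  have hd := depthV_one_of_adj hG r x hx
  have := le_armLenV hG r (v := x) (x := x) hx.ne' (headV_eq_self hG r x hd)
  omega

lemma exists_of_le_armLenV {x : V} (hx : G.Adj r x) {c : ℕ} (h1 : 1 ≤ c)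
    (h2 : c ≤ armLenV hG r x) :
    ∃ v, v ≠ r ∧ headV hG r v = x ∧ depthV hG r v = c := by
  classical
  have hmem : x ∈ Finset.univ.filter (fun w => w ≠ r ∧ headV hG r w = x) := by
    simp [hx.ne', headV_eq_self hG r x (depthV_one_of_adj hG r x hx)]
  obtain ⟨v0, hv0mem, hsup⟩ :=
    Finset.exists_mem_eq_sup (Finset.univ.filter (fun w => w ≠ r ∧ headV hG r w = x))
      ⟨x, hmem⟩ (depthV hG r)
  simp only [Finset.mem_filter, Finset.mem_univ, true_and] at hv0mem
  -- descend from v0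
  have descend : ∀ d v, v ≠ r → headV hG r v = x → depthV hG r v = c + d →
      ∃ w, w ≠ r ∧ headV hG r w = x ∧ depthV hG r w = c := by
    intro d
    induction d with
    | zero => intro v h1' h2' h3'; exact ⟨v, h1', h2', by omega⟩
    | succ d ih =>
      intro v hvr hvh hvd
      obtain ⟨hadj, hdd, _⟩ := parV_spec hG r v hvr
      have hdp : depthV hG r (parV hG r v) = c + d := by omega
      have hpr : parV hG r v ≠ r := by
        intro h
        rw [h, depthV_r] at hdp
        omega
      exact ih (parV hG r v) hpr (by rw [headV_par hG r v hvr hpr, hvh]) hdp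
  have hd0 : depthV hG r v0 = c + (armLenV hG r x - c) := by
    have : armLenV hG r x = depthV hG r v0 := hsup
    omega
  exact descend _ v0 hv0mem.1 hv0mem.2 hd0

/-- the vertex at depth `c` on the arm through `x` -/
noncomputable def armVtx (x : V) (c : ℕ) : V :=
  if h : ∃ v, v ≠ r ∧ headV hG r v = x ∧ depthV hG r v = c then h.choose else r

lemma armVtx_spec {x : V} (hx : G.Adj r x) {c : ℕ} (h1 : 1 ≤ c) (h2 : c ≤ armLenV hG r x) :
    armVtx hG r x c ≠ r ∧ headV hG r (armVtx hG r x c) = x ∧ depthV hG r (armVtx hG r x c) = c := by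
  have h := exists_of_le_armLenV hG r hx h1 h2
  unfold armVtx
  rw [dif_pos h]
  exact h.choose_spec

lemma armVtx_eq (h23 : ∀ x, x ≠ r → (G.neighborSet x).ncard ≤ 2)
    {x v : V} (hx : G.Adj r x) (hv : v ≠ r) (hh : headV hG r v = x) {c : ℕ}
    (hd : depthV hG r v = c) : armVtx hG r x c = v := by
  have h1 : 1 ≤ c := by have := depthV_pos hG r v hv; omega
  have h2 : c ≤ armLenV hG r x := by have := le_armLenV hG r hv hh; omega
  obtain ⟨ha, hb, hc⟩ := armVtx_spec hG r hx h1 h2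
  exact same_arm_unique hG r h23 c _ _ ha hv (by rw [hb, hh]) hc hd

lemma armVtx_one (h23 : ∀ x, x ≠ r → (G.neighborSet x).ncard ≤ 2) {x : V} (hx : G.Adj r x) :
    armVtx hG r x 1 = x :=
  armVtx_eq hG r h23 hx hx.ne' (headV_eq_self hG r x (depthV_one_of_adj hG r x hx))
    (depthV_one_of_adj hG r x hx)

lemma armVtx_adj (h23 : ∀ x, x ≠ r → (G.neighborSet x).ncard ≤ 2) {x : V} (hx : G.Adj r x)
    {c : ℕ} (h1 : 1 ≤ c) (h2 : c + 1 ≤ armLenV hG r x) :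
    G.Adj (armVtx hG r x c) (armVtx hG r x (c+1)) := by
  obtain ⟨ha, hb, hc⟩ := armVtx_spec hG r hx (show 1 ≤ c+1 by omega) h2
  set w := armVtx hG r x (c+1)
  obtain ⟨hadj, hdd, _⟩ := parV_spec hG r w ha
  have hdp : depthV hG r (parV hG r w) = c := by omega
  have hpr : parV hG r w ≠ r := by
    intro h
    rw [h, depthV_r] at hdp
    omega
  have hhp : headV hG r (parV hG r w) = x := by rw [headV_par hG r w ha hpr, hb]
  have heqv := armVtx_eq hG r h23 hx hpr hhp hdp
  rw [← heqv] at hadj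
  exact hadj

lemma armVtx_nbr (h23 : ∀ x, x ≠ r → (G.neighborSet x).ncard ≤ 2) {x : V} (hx : G.Adj r x)
    {c : ℕ} (h1 : 1 ≤ c) (h2 : c ≤ armLenV hG r x) :
    ∀ w, G.Adj (armVtx hG r x c) w →
      (c = 1 ∧ w = r) ∨ (∃ c', c = c' + 1 ∧ 1 ≤ c' ∧ w = armVtx hG r x c') ∨
      (c + 1 ≤ armLenV hG r x ∧ w = armVtx hG r x (c+1)) := by
  intro w hadj
  obtain ⟨hu, hh, hd⟩ := armVtx_spec hG r hx h1 h2
  set u := armVtx hG r x c with hudef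
  by_cases hw : w = r
  · left
    refine ⟨?_, hw⟩
    have : G.Adj r u := by rw [← hw]; exact hadj.symm
    have := depthV_one_of_adj hG r u this
    omega
  · rcases adj_depthV hG r hadj with hdw | hdw
    · -- w is the child
      right; right
      have hpw : parV hG r w = u := parV_of_adj hG r hadj (by omega)
      have hhw : headV hG r w = x := by
        rw [← headV_par hG r w hw (by rw [hpw]; exact hu), hpw, hh]
      have hdw' : depthV hG r w = c + 1 := by omega
      have hle := le_armLenV hG r hw hhw
      exact ⟨by omega, (armVtx_eq hG r h23 hx hw hhw hdw').symm⟩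
    · -- w is the parent
      right; left
      have hdw' : depthV hG r w = c - 1 := by omega
      have hwpos := depthV_pos hG r w hw
      have hpu : parV hG r u = w := parV_of_adj hG r hadj.symm (by omega)
      have hhw : headV hG r w = x := by
        rw [← hpu, headV_par hG r u hu (by rw [hpu]; exact hw), hh]
      exact ⟨c - 1, by omega, by omega, (armVtx_eq hG r h23 hx hw hhw hdw').symm⟩

include hG in
lemma spider_structure (h23 : ∀ x, x ≠ r → (G.neighborSet x).ncard ≤ 2) :
    ∃ (k : ℕ) (m : Fin k → ℕ) (arm : Fin k → ℕ → V),
      k = (G.neighborSet r).ncard ∧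
      (∀ i, 1 ≤ m i) ∧
      (Fintype.card V = 1 + ∑ i, m i) ∧
      (∀ i c, 1 ≤ c → c ≤ m i → arm i c ≠ r) ∧
      (∀ i c j c', 1 ≤ c → c ≤ m i → 1 ≤ c' → c' ≤ m j →
        arm i c = arm j c' → i = j ∧ c = c') ∧
      (∀ v, v ≠ r → ∃ i c, 1 ≤ c ∧ c ≤ m i ∧ arm i c = v) ∧
      (∀ i, G.Adj r (arm i 1)) ∧
      (∀ i c, 1 ≤ c → c + 1 ≤ m i → G.Adj (arm i c) (arm i (c+1))) ∧
      (∀ i c w, 1 ≤ c → c ≤ m i → G.Adj (arm i c) w →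
        (c = 1 ∧ w = r) ∨ (∃ c', c = c' + 1 ∧ 1 ≤ c' ∧ w = arm i c') ∨
        (c + 1 ≤ m i ∧ w = arm i (c+1))) := by
  classical
  have hcard : Fintype.card (G.neighborSet r) = (G.neighborSet r).ncard := by
    rw [← Nat.card_coe_set_eq, Nat.card_eq_fintype_card]
  set k := (G.neighborSet r).ncard with hk
  set e : G.neighborSet r ≃ Fin k := Fintype.equivFinOfCardEq hcard with he
  have hadjx : ∀ i : Fin k, G.Adj r (e.symm i : V) := fun i => (e.symm i).2
  refine ⟨k, fun i => armLenV hG r (e.symm i : V), fun i c => armVtx hG r (e.symm i : V) c,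
    rfl, ?_, ?_, ?_, ?_, ?_, ?_, ?_, ?_⟩
  · exact fun i => armLenV_pos hG r (hadjx i)
  · -- cardinality
    have hEquiv : V ≃ Option (Σ i : Fin k, Fin (armLenV hG r (e.symm i : V))) := by
      refine Equiv.ofBijective (fun v =>
        if hv : v = r then none else
          some ⟨e ⟨headV hG r v, headV_adj hG r v hv⟩,
            ⟨depthV hG r v - 1, ?_⟩⟩) ⟨?_, ?_⟩
      · have h1 := depthV_pos hG r v hv
        have h2 : (e.symm (e ⟨headV hG r v, headV_adj hG r v hv⟩) : V) = headV hG r v := by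
          rw [Equiv.symm_apply_apply]
        rw [h2]
        have := le_armLenV hG r hv (x := headV hG r v) rfl
        omega
      · intro a b hab
        by_cases ha : a = r <;> by_cases hb : b = r
        · rw [ha, hb]
        · simp [ha, hb] at hab
        · simp [ha, hb] at hab
        · simp only [ha, hb, dite_false, dif_neg, not_false_iff] at hab
          obtain ⟨h1, h2⟩ := Sigma.mk.inj_iff.mp (Option.some.inj hab)
          have hx : (⟨headV hG r a, headV_adj hG r a ha⟩ : G.neighborSet r)
              = ⟨headV hG r b, headV_adj hG r b hb⟩ := e.injective h1
          have hhead : headV hG r a = headV hG r b := congrArg Subtype.val hx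
          have hda := depthV_pos hG r a ha
          have hdb := depthV_pos hG r b hb
          have hdep : depthV hG r a = depthV hG r b := by
            have h3 : depthV hG r a - 1 = depthV hG r b - 1 := by
              have := (Fin.heq_ext_iff (by rw [h1])).mp h2
              exact this
            omega
          exact same_arm_unique hG r h23 (depthV hG r a) a b ha hb hhead rfl hdep.symm
      · intro o
        match o with
        | none => exact ⟨r, by simp⟩
        | some ⟨i, c⟩ =>
          obtain ⟨ha1, ha2, ha3⟩ := armVtx_spec hG r (hadjx i)
            (show 1 ≤ (c:ℕ)+1 by omega) (show (c:ℕ)+1 ≤ armLenV hG r (e.symm i : V) from c.isLt)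
          refine ⟨armVtx hG r (e.symm i : V) ((c:ℕ)+1), ?_⟩
          beta_reduce
          rw [dif_neg ha1]
          have hxeq : (⟨headV hG r _, headV_adj hG r _ ha1⟩ : G.neighborSet r) = e.symm i :=
            Subtype.ext ha2
          congr 1
          refine Sigma.ext ?_ ?_
          · simp only [hxeq, Equiv.apply_symm_apply]
          · rw [Fin.heq_ext_iff]
            · simp [ha3]
            · simp only [hxeq, Equiv.apply_symm_apply]
    have hc := Fintype.card_congr hEquiv
    rw [hc, Fintype.card_option, Fintype.card_sigma]
    simp only [Fintype.card_fin]
    omega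
  · exact fun i c h1 h2 => (armVtx_spec hG r (hadjx i) h1 h2).1
  · intro i c j c' h1 h2 h1' h2' heq
    obtain ⟨ha1, ha2, ha3⟩ := armVtx_spec hG r (hadjx i) h1 h2
    obtain ⟨hb1, hb2, hb3⟩ := armVtx_spec hG r (hadjx j) h1' h2'
    have heq' : armVtx hG r (e.symm i : V) c = armVtx hG r (e.symm j : V) c' := heq
    rw [← heq'] at hb2 hb3
    have hx : (e.symm i : V) = (e.symm j : V) := by rw [← ha2, ← hb2]
    have hsx : e.symm i = e.symm j := Subtype.ext hx
    exact ⟨e.symm.injective hsx, by omega⟩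
  · intro v hv
    have hhead : G.Adj r (headV hG r v) := headV_adj hG r v hv
    refine ⟨e ⟨headV hG r v, hhead⟩, depthV hG r v, depthV_pos hG r v hv, ?_, ?_⟩
    · have h2 : (e.symm (e ⟨headV hG r v, hhead⟩) : V) = headV hG r v := by
        rw [Equiv.symm_apply_apply]
      show depthV hG r v ≤ armLenV hG r (e.symm (e ⟨headV hG r v, hhead⟩) : V)
      rw [h2]
      exact le_armLenV hG r hv rfl
    · have h2 : (e.symm (e ⟨headV hG r v, hhead⟩) : V) = headV hG r v := by
        rw [Equiv.symm_apply_apply]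
      show armVtx hG r (e.symm (e ⟨headV hG r v, hhead⟩) : V) (depthV hG r v) = v
      rw [h2]
      exact armVtx_eq hG r h23 hhead hv rfl rfl
  · intro i
    show G.Adj r (armVtx hG r (e.symm i : V) 1)
    rw [armVtx_one hG r h23 (hadjx i)]
    exact hadjx i
  · exact fun i c h1 h2 => armVtx_adj hG r h23 (hadjx i) h1 h2
  · exact fun i c w h1 h2 hadj => armVtx_nbr hG r h23 (hadjx i) h1 h2 w hadj

end struct

section assembly

open SimpleGraph

lemma spider_bound {V : Type} [Fintype V] (G : SimpleGraph V) (r : V) (hT : G.IsTree)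
    (h3 : 3 ≤ (G.neighborSet r).ncard)
    (h23 : ∀ v, v ≠ r → (G.neighborSet v).ncard ≤ 2) :
    (iotaNum G : ℝ) ≤ 4 * Real.sqrt (Fintype.card V) := by
  classical
  obtain ⟨k, m, arm, hkk, hQ1, hcardV, hne, hinj, hsurj, hadjr, hadja, hnbr⟩ :=
    spider_structure hT r h23
  set n := Fintype.card V with hn
  set s := Nat.sqrt n with hs
  have hsum : k ≤ ∑ i, m i := by
    calc k = ∑ _i : Fin k, 1 := by simp
      _ ≤ ∑ i, m i := Finset.sum_le_sum (fun i _ => hQ1 i)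
  have hn4 : 4 ≤ n := by omega
  have hss : n < (s+1)*(s+1) := Nat.lt_succ_sqrt n
  have hs2 : 2 ≤ s := by nlinarith [hss, hn4]
  have hMs : Ms m k = ∑ i, m i := Ms_top m
  have HC2n : 4 * Ms m k + (s+1) + 1 ≤ ((s+1)+2)*(4*s) := by
    have hprod : (s+1)*(s+1) = s*s + 2*s + 1 := by ring
    have h2 : ((s+1)+2)*(4*s) = 4*(s*s) + 12*s := by ring
    omega
  have hcd : CanDecon G (4*s) :=
    canDecon_of_certificate G (4*s) (ag r m arm (s+1)) (Ecert r m arm (4*s) (s+1))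
      (BBb (s+1) m k)
      (sched_walk G r m arm (s+1) hadjr hadja hQ1 (by omega))
      (sched_E0 r m arm (4*s) (s+1) hsurj)
      (sched_keep r m arm (4*s) (s+1) hne hinj HC2n (by omega))
      (sched_exp G r m arm (4*s) (s+1) hne hinj HC2n hnbr hsurj (by omega) (by omega))
      (sched_T r m arm (4*s) (s+1) hne hinj HC2n (by omega))
  have hiota : iotaNum G ≤ 4*s := Nat.sInf_le hcd
  have hsq : s*s ≤ n := by
    have h := Nat.sqrt_le' n
    rw [pow_two] at h
    exact h
  have hsr : (s:ℝ) ≤ Real.sqrt n := by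
    have h1 : ((s:ℝ))^2 ≤ (n:ℝ) := by rw [pow_two]; exact_mod_cast hsq
    rw [show (s:ℝ) = Real.sqrt ((s:ℝ)^2) from (Real.sqrt_sq (by positivity)).symm]
    exact Real.sqrt_le_sqrt h1
  calc (iotaNum G : ℝ) ≤ ((4*s : ℕ) : ℝ) := by exact_mod_cast hiota
    _ = 4 * (s:ℝ) := by push_cast; ring
    _ ≤ 4 * Real.sqrt n := by linarith

end assembly

/-- Any spider `S` on `n` vertices has immunity number `O(√n)`;
in particular `ι(S) ≤ 4√n` when the root degree is at most `√n`. -/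
theorem immunity_spider_sqrt :
    (∃ C : ℝ, 0 < C ∧
      ∀ (V : Type) (_ : Fintype V) (G : SimpleGraph V) (r : V),
        G.IsTree → 3 ≤ (G.neighborSet r).ncard →
        (∀ v, v ≠ r → (G.neighborSet v).ncard ≤ 2) →
        (iotaNum G : ℝ) ≤ C * Real.sqrt (Fintype.card V)) ∧
    ∀ (V : Type) (_ : Fintype V) (G : SimpleGraph V) (r : V),
      G.IsTree → 3 ≤ (G.neighborSet r).ncard →
      (∀ v, v ≠ r → (G.neighborSet v).ncard ≤ 2) →
      ((G.neighborSet r).ncard : ℝ) ≤ Real.sqrt (Fintype.card V) →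
      (iotaNum G : ℝ) ≤ 4 * Real.sqrt (Fintype.card V) := by
  constructor
  · exact ⟨4, by norm_num, fun V inst G r hT h3 h23 => spider_bound G r hT h3 h23⟩
  · exact fun V inst G r hT h3 h23 _ => spider_bound G r hT h3 h23
end

section
/- Any rooted tree T of height h can be fully decontaminated by one agent with temporal immunity τ = 2h − 1, via the monotone strategy that starts at the root and visits each leaf in depth-first discovery order, returning to the root between consecutive leaves; moreover no vertex, once decontaminated, is ever recontaminated. -/
open scoped Classical

open SimpleGraph

section Lex
variable {α : Type*} [LinearOrder α]

theorem prefix_le : ∀ (p x : List α), p <+: x → p ≤ x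
  | [], x, _ => by
    cases x with
    | nil => exact le_rfl
    | cons b x => exact le_of_lt List.Lex.nil
  | a :: p', _, ⟨t, rfl⟩ => List.cons_le_cons a (prefix_le p' _ ⟨t, rfl⟩)

theorem lex_interval : ∀ (p x y : List α), p <+: y → p ≤ x → x ≤ y → p <+: x
  | [], _, _, _, _, _ => List.nil_prefix
  | a :: p', x, _, ⟨t, rfl⟩, hpx, hxy => by
    match x with
    | [] =>
      exact absurd (lt_of_le_of_lt hpx (List.nil_lt_cons a _)) (lt_irrefl _)
    | b :: x' =>
      rcases lt_trichotomy a b with hab | hab | hab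
      · -- y < x, contradiction with x ≤ y
        have hyx : (a :: (p' ++ t)) < (b :: x') := List.Lex.rel hab
        exact absurd (lt_of_le_of_lt hxy hyx) (lt_irrefl _)
      · subst hab
        have hp'x' : p' ≤ x' := by
          by_contra hn
          have hx'p' : x' < p' := lt_of_not_ge hn
          have : (a :: x') < (a :: p') := List.Lex.cons hx'p'
          exact absurd (lt_of_le_of_lt hpx this) (lt_irrefl _)
        have hx'y' : x' ≤ (p' ++ t) := by
          by_contra hn
          have : (a :: (p' ++ t)) < (a :: x') := List.Lex.cons (lt_of_not_ge hn)
          exact absurd (lt_of_le_of_lt hxy this) (lt_irrefl _)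
        obtain ⟨t', ht'⟩ := lex_interval p' x' (p' ++ t) ⟨t, rfl⟩ hp'x' hx'y'
        exact ⟨t', by rw [List.cons_append, ht']⟩
      · have hxp : (b :: x') < (a :: p') := List.Lex.rel hab
        exact absurd (lt_of_le_of_lt hpx hxp) (lt_irrefl _)
end Lex

section Tree
variable {V : Type*} (G : SimpleGraph V) (r : V) (hc : G.Connected)

noncomputable def pth (v : V) : G.Walk r v :=
  (hc.exists_walk_length_eq_dist r v).choose

lemma pth_length (v : V) : (pth G r hc v).length = G.dist r v :=
  (hc.exists_walk_length_eq_dist r v).choose_spec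

lemma pth_isPath (v : V) : (pth G r hc v).IsPath :=
  SimpleGraph.Walk.isPath_of_length_eq_dist _ (pth_length G r hc v)

def Anc (u v : V) : Prop := u ∈ (pth G r hc v).support

lemma exists_walk_getVert : ∀ {x y : V} (w : G.Walk x y) (j : ℕ),
    ∃ q : G.Walk x (w.getVert j), q.length ≤ j := by
  intro x y w
  induction w with
  | nil => intro j; exact ⟨SimpleGraph.Walk.nil, by simp⟩
  | cons h p ih =>
    intro j
    cases j with
    | zero =>
      rw [SimpleGraph.Walk.getVert_zero]
      exact ⟨SimpleGraph.Walk.nil, by simp⟩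
    | succ j =>
      rw [SimpleGraph.Walk.getVert_cons_succ]
      obtain ⟨q, hq⟩ := ih j
      exact ⟨SimpleGraph.Walk.cons h q, by simpa using Nat.succ_le_succ hq⟩

lemma dist_getVert_le {x y : V} (w : G.Walk x y) (j : ℕ) :
    G.dist x (w.getVert j) ≤ j := by
  obtain ⟨q, hq⟩ := exists_walk_getVert G w j
  exact le_trans (SimpleGraph.dist_le q) hq

lemma takeUntil_pth (hac : G.IsAcyclic) {u v : V} (hu : Anc G r hc u v) :
    (pth G r hc v).takeUntil u hu = pth G r hc u := by
  have h1 : ((pth G r hc v).takeUntil u hu).IsPath := (pth_isPath G r hc v).takeUntil hu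
  have := hac.path_unique ⟨_, h1⟩ ⟨_, pth_isPath G r hc u⟩
  exact congrArg Subtype.val this

lemma pth_decomp (hac : G.IsAcyclic) {u v : V} (hu : Anc G r hc u v) :
    pth G r hc v = (pth G r hc u).append ((pth G r hc v).dropUntil u hu) := by
  conv_lhs => rw [← SimpleGraph.Walk.take_spec (pth G r hc v) hu]
  rw [takeUntil_pth G r hc hac hu]

lemma anc_getVert (hac : G.IsAcyclic) {u v : V} (hu : Anc G r hc u v) :
    (pth G r hc v).getVert (G.dist r u) = u := by
  conv_lhs => rw [pth_decomp G r hc hac hu]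
  rw [SimpleGraph.Walk.getVert_append, pth_length]
  simp

lemma anc_le {u v : V} (hu : Anc G r hc u v) : G.dist r u ≤ G.dist r v := by
  obtain ⟨n, hn, hlen⟩ := SimpleGraph.Walk.mem_support_iff_exists_getVert.mp hu
  calc G.dist r u = G.dist r ((pth G r hc v).getVert n) := by rw [hn]
    _ ≤ n := dist_getVert_le G _ n
    _ ≤ (pth G r hc v).length := hlen
    _ = G.dist r v := pth_length G r hc v

lemma anc_lt {u v : V} (hu : Anc G r hc u v) (hne : u ≠ v) :
    G.dist r u < G.dist r v := by
  obtain ⟨n, hn, hlen⟩ := SimpleGraph.Walk.mem_support_iff_exists_getVert.mp hu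
  have h1 : G.dist r u ≤ n := by
    calc G.dist r u = G.dist r ((pth G r hc v).getVert n) := by rw [hn]
      _ ≤ n := dist_getVert_le G _ n
  rcases lt_or_eq_of_le (anc_le G r hc hu) with h | h
  · exact h
  · exfalso
    have hn' : n = (pth G r hc v).length := by
      have := pth_length G r hc v
      omega
    rw [hn', SimpleGraph.Walk.getVert_length] at hn
    exact hne hn.symm
end Tree
section Tree2
variable {V : Type*} (G : SimpleGraph V) (r : V) (hc : G.Connected)

lemma anc_support_prefix (hac : G.IsAcyclic) {u v : V} (hu : Anc G r hc u v) :
    (pth G r hc u).support <+: (pth G r hc v).support := by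
  conv_rhs => rw [pth_decomp G r hc hac hu]
  rw [SimpleGraph.Walk.support_append]
  exact ⟨_, rfl⟩

lemma anc_refl (v : V) : Anc G r hc v v := SimpleGraph.Walk.end_mem_support _

lemma anc_root (v : V) : Anc G r hc r v := SimpleGraph.Walk.start_mem_support _

lemma anc_of_prefix {u v : V} (h : (pth G r hc u).support <+: (pth G r hc v).support) :
    Anc G r hc u v :=
  h.sublist.subset (SimpleGraph.Walk.end_mem_support _)

lemma anc_trans (hac : G.IsAcyclic) {w u v : V} (h1 : Anc G r hc w u) (h2 : Anc G r hc u v) :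
    Anc G r hc w v :=
  (anc_support_prefix G r hc hac h2).sublist.subset h1

lemma anc_adj (hac : G.IsAcyclic) {u w : V} (hadj : G.Adj u w) :
    Anc G r hc u w ∨ Anc G r hc w u := by
  by_cases hw : w ∈ (pth G r hc u).support
  · right; exact hw
  · left
    have hq : ((pth G r hc u).concat hadj).IsPath := by
      rw [SimpleGraph.Walk.isPath_def, SimpleGraph.Walk.support_concat]
      rw [List.nodup_append]
      refine ⟨(pth_isPath G r hc u).support_nodup, List.nodup_singleton w, ?_⟩
      intro a ha b hb hab
      rw [List.mem_singleton] at hb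
      subst hb
      exact hw (hab ▸ ha)
    have heq : (pth G r hc u).concat hadj = pth G r hc w := by
      have := hac.path_unique ⟨_, hq⟩ ⟨_, pth_isPath G r hc w⟩
      exact congrArg Subtype.val this
    have hu : u ∈ ((pth G r hc u).concat hadj).support := by
      rw [SimpleGraph.Walk.support_concat]
      exact List.mem_append.mpr (Or.inl (SimpleGraph.Walk.end_mem_support _))
    rwa [heq] at hu

lemma adj_dist_succ (hac : G.IsAcyclic) {u w : V} (hadj : G.Adj u w)
    (hu : Anc G r hc u w) : G.dist r w = G.dist r u + 1 := by
  have h1 : G.dist r u < G.dist r w := anc_lt G r hc hu hadj.ne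
  have h2 : G.dist r w ≤ G.dist r u + 1 := by
    have := SimpleGraph.dist_le ((pth G r hc u).concat hadj)
    rwa [SimpleGraph.Walk.length_concat, pth_length] at this
  omega

noncomputable def trip (v : V) : G.Walk r r :=
  (pth G r hc v).append (pth G r hc v).reverse

lemma trip_length (v : V) : (trip G r hc v).length = 2 * G.dist r v := by
  rw [trip, SimpleGraph.Walk.length_append, SimpleGraph.Walk.length_reverse, pth_length]
  omega

lemma trip_getVert_fst (hac : G.IsAcyclic) {u v : V} (hu : Anc G r hc u v) :
    (trip G r hc v).getVert (G.dist r u) = u := by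
  rw [trip, SimpleGraph.Walk.getVert_append]
  by_cases hlt : G.dist r u < (pth G r hc v).length
  · rw [if_pos hlt]
    exact anc_getVert G r hc hac hu
  · rw [if_neg hlt]
    have hle : G.dist r u ≤ G.dist r v := anc_le G r hc hu
    rw [pth_length] at hlt
    have heq : G.dist r u = G.dist r v := by omega
    have huv : u = v := by
      by_contra hne
      exact absurd heq (Nat.ne_of_lt (anc_lt G r hc hu hne))
    subst huv
    rw [pth_length, heq, Nat.sub_self, SimpleGraph.Walk.getVert_zero]

lemma trip_getVert_snd (hac : G.IsAcyclic) {u v : V} (hu : Anc G r hc u v) :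
    (trip G r hc v).getVert (2 * G.dist r v - G.dist r u) = u := by
  have hle : G.dist r u ≤ G.dist r v := anc_le G r hc hu
  rw [trip, SimpleGraph.Walk.getVert_append, pth_length]
  rw [if_neg (by omega)]
  have h1 : 2 * G.dist r v - G.dist r u - G.dist r v = G.dist r v - G.dist r u := by omega
  rw [h1, SimpleGraph.Walk.getVert_reverse, pth_length]
  have h2 : G.dist r v - (G.dist r v - G.dist r u) = G.dist r u := by omega
  rw [h2]
  exact anc_getVert G r hc hac hu

noncomputable def walkOf : List V → G.Walk r r
  | [] => SimpleGraph.Walk.nil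
  | v :: l => (trip G r hc v).append (walkOf l)

noncomputable def Tl (l : List V) (i : ℕ) : ℕ := 2 * ((l.take i).map (G.dist r)).sum

lemma Tl_zero (l : List V) : Tl G r l 0 = 0 := by simp [Tl]

lemma Tl_succ (l : List V) (i : ℕ) (hi : i < l.length) :
    Tl G r l (i + 1) = Tl G r l i + 2 * G.dist r l[i] := by
  rw [Tl, Tl, List.take_succ, List.getElem?_eq_getElem hi]
  rw [List.map_append, List.sum_append]
  simp
  omega

lemma Tl_mono (l : List V) {i j : ℕ} (h : i ≤ j) : Tl G r l i ≤ Tl G r l j := by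
  rw [Tl, Tl]
  have hsub : List.Sublist ((l.take i).map (G.dist r)) ((l.take j).map (G.dist r)) :=
    ((List.take_prefix_take_left (l := l) h).map _).sublist
  have := List.Sublist.sum_le_sum hsub (fun a _ => Nat.zero_le a)
  omega

lemma walkOf_length (l : List V) : (walkOf G r hc l).length = Tl G r l l.length := by
  induction l with
  | nil => simp [walkOf, Tl]
  | cons v l ih =>
    rw [walkOf, SimpleGraph.Walk.length_append, trip_length, ih]
    rw [Tl, Tl]
    simp
    omega

lemma walkOf_getVert (l : List V) (i j : ℕ) (hi : i < l.length) (hj : j ≤ 2 * G.dist r l[i]) :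
    (walkOf G r hc l).getVert (Tl G r l i + j) = (trip G r hc l[i]).getVert j := by
  induction l generalizing i with
  | nil => simp at hi
  | cons v l ih =>
    cases i with
    | zero =>
      rw [Tl_zero, Nat.zero_add]
      simp only [List.getElem_cons_zero] at hj ⊢
      rw [walkOf, SimpleGraph.Walk.getVert_append, trip_length]
      by_cases hlt : j < 2 * G.dist r v
      · rw [if_pos hlt]
      · rw [if_neg hlt]
        have hj2 : j = 2 * G.dist r v := by omega
        rw [hj2, Nat.sub_self, SimpleGraph.Walk.getVert_zero]
        rw [← trip_length G r hc v, SimpleGraph.Walk.getVert_length]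
    | succ i =>
      simp only [List.length_cons, Nat.succ_lt_succ_iff] at hi
      simp only [List.getElem_cons_succ] at hj ⊢
      have hTs : Tl G r (v :: l) (i + 1) = 2 * G.dist r v + Tl G r l i := by
        rw [Tl, Tl, List.take_succ_cons, List.map_cons, List.sum_cons]
        omega
      rw [hTs, walkOf, SimpleGraph.Walk.getVert_append, trip_length]
      rw [if_neg (by omega)]
      have harith : 2 * G.dist r v + Tl G r l i + j - 2 * G.dist r v = Tl G r l i + j := by omega
      rw [harith]
      exact ih i hi hj
end Tree2

section Tree3
variable {V : Type*} (G : SimpleGraph V) (r : V) (hc : G.Connected)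

lemma mem_trip_support {u v : V} (h : u ∈ (trip G r hc v).support) : Anc G r hc u v := by
  unfold trip at h
  rcases (SimpleGraph.Walk.mem_support_append_iff _ _).mp h with h | h
  · exact h
  · rw [SimpleGraph.Walk.support_reverse] at h
    exact List.mem_reverse.mp h
end Tree3
theorem decon_invariant {V : Type*} (G : SimpleGraph V) (τ : ℕ) (agent : ℕ → V)
    (Hrev : ∀ t v, (∃ s ≤ t, agent s = v) →
      (∃ w, G.Adj v w ∧ ∀ s ≤ t + 1, agent s ≠ w) →
      ∃ s ≤ t + 1, t + 1 ≤ s + τ ∧ agent s = v) :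
    ∀ t, (∀ v, ((deconState G τ agent t).1 v ↔ ∀ s ≤ t, agent s ≠ v)) ∧
      (∀ v s, s ≤ t → agent s = v → (deconState G τ agent t).2 v ≤ t - s) := by
  intro t
  induction t with
  | zero =>
    constructor
    · intro v
      simp only [deconState]
      constructor
      · intro hv s hs
        interval_cases s
        exact fun h => hv h.symm
      · intro h h2
        exact h 0 le_rfl h2.symm
    · intro v s hs _
      simp [deconState]
  | succ t ih =>
    obtain ⟨ihC, ihX⟩ := ih
    -- no recontamination happens
    have hnorec : ∀ v, ¬ (v ≠ agent (t+1) ∧ ¬ (deconState G τ agent t).1 v ∧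
        (∃ w, G.Adj v w ∧ ((deconState G τ agent t).1 w ∧ w ≠ agent (t+1))) ∧
        τ ≤ (deconState G τ agent t).2 v) := by
      rintro v ⟨hvp, hvC, ⟨w, hadj, hwC, hwp⟩, hX⟩
      have hvis : ∃ s ≤ t, agent s = v := by
        by_contra hno
        push_neg at hno
        exact hvC ((ihC v).2 fun s hs => hno s hs)
      have hwun : ∀ s ≤ t + 1, agent s ≠ w := by
        intro s hs
        rcases Nat.lt_or_ge s (t+1) with h | h
        · exact (ihC w).1 hwC s (Nat.lt_succ_iff.mp h)
        · have : s = t + 1 := le_antisymm hs h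
          rw [this]
          exact fun hh => hwp hh.symm
      obtain ⟨s, hs, hts, hav⟩ := Hrev t v hvis ⟨w, hadj, hwun⟩
      have hslt : s ≤ t := by
        rcases Nat.lt_or_ge s (t+1) with h | h
        · exact Nat.lt_succ_iff.mp h
        · exact absurd (le_antisymm hs h ▸ hav) (fun hh => hvp hh.symm)
      have := ihX v s hslt hav
      omega
    constructor
    · intro v
      simp only [deconState]
      constructor
      · rintro (⟨hC, hp⟩ | hrec) s hs
        · rcases Nat.lt_or_ge s (t+1) with h | h
          · exact (ihC v).1 hC s (Nat.lt_succ_iff.mp h)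
          · have : s = t + 1 := le_antisymm hs h
            rw [this]; exact fun hh => hp hh.symm
        · exact absurd hrec (hnorec v)
      · intro h
        left
        refine ⟨(ihC v).2 (fun s hs => h s (hs.trans (Nat.le_succ t))), ?_⟩
        exact fun hh => h (t+1) le_rfl hh.symm
    · intro v s hs hav
      simp only [deconState]
      split
      · omega
      · rename_i hcond
        push_neg at hcond
        have hvp : v ≠ agent (t + 1) := hcond.1
        have hsle : s ≤ t := by
          rcases Nat.lt_or_ge s (t+1) with h | h
          · exact Nat.lt_succ_iff.mp h
          · exact absurd (le_antisymm hs h ▸ hav) (fun hh => hvp hh.symm)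
        have := ihX v s hsle hav
        omega
/-- Any rooted tree of height `h` can be fully decontaminated by
one agent with temporal immunity `2h - 1`, starting at the root, via a monotone
strategy (no decontaminated vertex is ever recontaminated). -/
theorem decon_rooted_tree {V : Type*} [Fintype V] (G : SimpleGraph V) (r : V)
    (h : ℕ) (htree : G.IsTree) (hh : ∀ v, G.dist r v ≤ h) :
    ∃ agent : ℕ → V, agent 0 = r ∧ IsWalkStrategy G agent ∧
      MonotoneStrategy G (2 * h - 1) agent ∧
      ∃ T, CleanAt G (2 * h - 1) agent T := by
  classical
  obtain ⟨hconn, hac⟩ := htree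
  letI : LinearOrder V := LinearOrder.lift' (Fintype.equivFin V) (Fintype.equivFin V).injective
  have keyinj : ∀ a b : V, (pth G r hconn a).support = (pth G r hconn b).support → a = b := by
    intro a b hab
    have h1 : Anc G r hconn a b := by
      have := anc_refl G r hconn a
      rw [Anc] at this ⊢
      rw [← hab]
      exact this
    have h2 : Anc G r hconn b a := by
      have := anc_refl G r hconn b
      rw [Anc] at this ⊢
      rw [hab]
      exact this
    by_contra hne
    have g1 := anc_lt G r hconn h1 hne
    have g2 := anc_lt G r hconn h2 (Ne.symm hne)
    omega
  set rel : V → V → Prop := fun a b => (pth G r hconn a).support ≤ (pth G r hconn b).support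
    with hreldef
  haveI hdec : DecidableRel rel := Classical.decRel _
  haveI : IsTrans V rel := ⟨fun a b c h1 h2 => le_trans h1 h2⟩
  haveI : Std.Antisymm rel := ⟨fun a b h1 h2 => keyinj a b (le_antisymm h1 h2)⟩
  haveI : Std.Total rel := ⟨fun a b => le_total _ _⟩
  set L : List V := Finset.sort Finset.univ rel with hLdef
  have hLmem : ∀ v, v ∈ L := fun v => (Finset.mem_sort (r := rel)).mpr (Finset.mem_univ v)
  have hLnd : L.Nodup := Finset.sort_nodup (s := Finset.univ) (r := rel)
  have hLsort : L.Pairwise rel := Finset.pairwise_sort (s := Finset.univ) (r := rel)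
  have hpos_lt : ∀ v : V, L.idxOf v < L.length := fun v => List.idxOf_lt_length_of_mem (hLmem v)
  have hpos_get : ∀ v : V, L[L.idxOf v]'(hpos_lt v) = v := fun v => List.getElem_idxOf _
  have hsorted : ∀ (i j : ℕ) (hi : i < L.length) (hj : j < L.length), i ≤ j →
      (pth G r hconn (L[i]'hi)).support ≤ (pth G r hconn (L[j]'hj)).support := by
    intro i j hi hj hij
    rcases Nat.lt_or_ge i j with hlt | hge
    · exact hLsort.rel_get_of_lt (show (⟨i, hi⟩ : Fin L.length) < ⟨j, hj⟩ from hlt)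
    · have : i = j := by omega
      subst this
      exact le_rfl
  have hpos_le : ∀ (u : V) (i : ℕ) (hi : i < L.length),
      Anc G r hconn u (L[i]'hi) → L.idxOf u ≤ i := by
    intro u i hi hanc
    by_contra hcon
    push_neg at hcon
    have h1 : (pth G r hconn (L[i]'hi)).support ≤ (pth G r hconn u).support := by
      have := hsorted i (L.idxOf u) hi (hpos_lt u) (le_of_lt hcon)
      rwa [hpos_get] at this
    have h2 : (pth G r hconn u).support ≤ (pth G r hconn (L[i]'hi)).support :=
      prefix_le _ _ (anc_support_prefix G r hconn hac hanc)
    have heq : L[i]'hi = u := keyinj _ _ (le_antisymm h1 h2)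
    have heq2 : L[i]'hi = L[L.idxOf u]'(hpos_lt u) := by rw [hpos_get, heq]
    have := hLnd.getElem_inj_iff.mp heq2
    omega
  have hanc_interval : ∀ (u w : V) (i : ℕ) (hi : i < L.length), Anc G r hconn u w →
      L.idxOf u ≤ i → i ≤ L.idxOf w → Anc G r hconn u (L[i]'hi) := by
    intro u w i hi hanc hui hiw
    apply anc_of_prefix
    apply lex_interval (pth G r hconn u).support (pth G r hconn (L[i]'hi)).support
      (pth G r hconn w).support (anc_support_prefix G r hconn hac hanc)
    · have := hsorted (L.idxOf u) i (hpos_lt u) hi hui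
      rwa [hpos_get] at this
    · have := hsorted i (L.idxOf w) hi (hpos_lt w) hiw
      rwa [hpos_get] at this
  have hTsucc : ∀ (i : ℕ) (hi : i < L.length),
      Tl G r L (i + 1) = Tl G r L i + 2 * G.dist r (L[i]'hi) := fun i hi => Tl_succ G r L i hi
  have hTmono : ∀ {i j : ℕ}, i ≤ j → Tl G r L i ≤ Tl G r L j := fun hij => Tl_mono G r L hij
  have hvisit : ∀ (i : ℕ) (hi : i < L.length) (u : V), Anc G r hconn u (L[i]'hi) →
      (walkOf G r hconn L).getVert (Tl G r L i + G.dist r u) = u ∧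
      (walkOf G r hconn L).getVert (Tl G r L i + (2 * G.dist r (L[i]'hi) - G.dist r u)) = u := by
    intro i hi u hanc
    have hle : G.dist r u ≤ G.dist r (L[i]'hi) := anc_le G r hconn hanc
    constructor
    · have h1 := walkOf_getVert G r hconn L i (G.dist r u) hi (by omega)
      exact h1.trans (trip_getVert_fst G r hconn hac hanc)
    · have h1 := walkOf_getVert G r hconn L i
        (2 * G.dist r (L[i]'hi) - G.dist r u) hi (by omega)
      exact h1.trans (trip_getVert_snd G r hconn hac hanc)
  have hcov : ∀ w : V,
      (walkOf G r hconn L).getVert (Tl G r L (L.idxOf w) + G.dist r w) = w := by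
    intro w
    have hanc : Anc G r hconn w (L[L.idxOf w]'(hpos_lt w)) := by
      rw [hpos_get]
      exact anc_refl G r hconn w
    exact (hvisit (L.idxOf w) (hpos_lt w) w hanc).1
  have hcov_le : ∀ w : V, Tl G r L (L.idxOf w) + G.dist r w ≤ Tl G r L L.length := by
    intro w
    have h1 := hTsucc (L.idxOf w) (hpos_lt w)
    rw [hpos_get] at h1
    have h2 : Tl G r L (L.idxOf w + 1) ≤ Tl G r L L.length := hTmono (hpos_lt w)
    omega
  have hattain : ∀ s, s < Tl G r L L.length → ∃ (i : ℕ) (hi : i < L.length),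
      Tl G r L i ≤ s ∧ s < Tl G r L (i + 1) ∧
      (walkOf G r hconn L).getVert s = (trip G r hconn (L[i]'hi)).getVert (s - Tl G r L i) := by
    intro s hs
    obtain ⟨i, hidef⟩ : ∃ i, i = Nat.findGreatest (fun k => Tl G r L k ≤ s) L.length := ⟨_, rfl⟩
    have hP0 : Tl G r L 0 ≤ s := by rw [Tl_zero]; exact Nat.zero_le s
    have hi_le : Tl G r L i ≤ s := by
      rw [hidef]
      exact Nat.findGreatest_spec (P := fun k => Tl G r L k ≤ s) (Nat.zero_le _) hP0
    have hi_lt_n : i < L.length := by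
      rcases Nat.lt_or_ge i L.length with h1 | h1
      · exact h1
      · exfalso
        have h2 : i ≤ L.length := hidef ▸ Nat.findGreatest_le L.length
        have h3 : i = L.length := by omega
        rw [h3] at hi_le
        omega
    have hnext : s < Tl G r L (i + 1) := by
      by_contra hcon
      push_neg at hcon
      have hng : ¬ (Tl G r L (i + 1) ≤ s) := by
        apply Nat.findGreatest_is_greatest (P := fun k => Tl G r L k ≤ s) (n := L.length)
        · rw [← hidef]
          exact Nat.lt_succ_self i
        · omega
      exact hng hcon
    refine ⟨i, hi_lt_n, hi_le, hnext, ?_⟩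
    have hoff : s - Tl G r L i ≤ 2 * G.dist r (L[i]'hi_lt_n) := by
      have := hTsucc i hi_lt_n
      omega
    have h1 := walkOf_getVert G r hconn L i (s - Tl G r L i) hi_lt_n hoff
    rw [show Tl G r L i + (s - Tl G r L i) = s from by omega] at h1
    exact h1
  have hτ : ∀ t v, (∃ s ≤ t, (walkOf G r hconn L).getVert s = v) →
      (∃ w, G.Adj v w ∧ ∀ s ≤ t + 1, (walkOf G r hconn L).getVert s ≠ w) →
      ∃ s ≤ t + 1, t + 1 ≤ s + (2 * h - 1) ∧ (walkOf G r hconn L).getVert s = v := by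
    rintro t u ⟨s0, hs0le, hs0⟩ ⟨w, hadj, hwun⟩
    have hw_after : t + 1 < Tl G r L (L.idxOf w) + G.dist r w := by
      by_contra hcon
      push_neg at hcon
      exact hwun _ hcon (hcov w)
    have hTn : t + 1 < Tl G r L L.length := lt_of_lt_of_le hw_after (hcov_le w)
    obtain ⟨i, hi, hTi_le, hTi1, hagent_t1⟩ := hattain (t + 1) hTn
    have hjb : t + 1 - Tl G r L i < 2 * G.dist r (L[i]'hi) := by
      have := hTsucc i hi
      omega
    have hs0n : s0 < Tl G r L L.length := by omega
    obtain ⟨i0, hi0, hTi0_le, hTi0_1, hagent_s0⟩ := hattain s0 hs0n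
    have hs0off : s0 - Tl G r L i0 ≤ (trip G r hconn (L[i0]'hi0)).length := by
      rw [trip_length]
      have := hTsucc i0 hi0
      omega
    have hu_eq : (trip G r hconn (L[i0]'hi0)).getVert (s0 - Tl G r L i0) = u := by
      rw [← hagent_s0, hs0]
    have hanc0 : Anc G r hconn u (L[i0]'hi0) := by
      apply mem_trip_support G r hconn
      exact SimpleGraph.Walk.mem_support_iff_exists_getVert.mpr ⟨s0 - Tl G r L i0, hu_eq, hs0off⟩
    have hju0 : G.dist r u ≤ s0 - Tl G r L i0 := by
      have := dist_getVert_le G (trip G r hconn (L[i0]'hi0)) (s0 - Tl G r L i0)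
      rwa [hu_eq] at this
    have hi0_le_i : i0 ≤ i := by
      by_contra hcon
      push_neg at hcon
      have : Tl G r L (i + 1) ≤ Tl G r L i0 := hTmono hcon
      omega
    have hanc_uw : Anc G r hconn u w := by
      rcases anc_adj G r hconn hac hadj with hcase | hcase
      · exact hcase
      · exfalso
        have hancw0 : Anc G r hconn w (L[i0]'hi0) := anc_trans G r hconn hac hcase hanc0
        have hwlt : G.dist r w < G.dist r u := anc_lt G r hconn hcase (Ne.symm hadj.ne)
        have hvw := (hvisit i0 hi0 w hancw0).1
        exact hwun (Tl G r L i0 + G.dist r w) (by omega) hvw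
    have hposu : L.idxOf u ≤ i := le_trans (hpos_le u i0 hi0 hanc0) hi0_le_i
    have hpos_wi : i ≤ L.idxOf w := by
      by_contra hcon
      push_neg at hcon
      have h1 := hTsucc (L.idxOf w) (hpos_lt w)
      rw [hpos_get] at h1
      have h2 : Tl G r L (L.idxOf w + 1) ≤ Tl G r L i := hTmono hcon
      omega
    have hanc_ui : Anc G r hconn u (L[i]'hi) := hanc_interval u w i hi hanc_uw hposu hpos_wi
    have hab : G.dist r u ≤ G.dist r (L[i]'hi) := anc_le G r hconn hanc_ui
    have hbh : G.dist r (L[i]'hi) ≤ h := hh _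
    have hah : G.dist r u ≤ h := hh u
    have hvis_i := hvisit i hi u hanc_ui
    by_cases hc1 : 2 * G.dist r (L[i]'hi) - G.dist r u ≤ t + 1 - Tl G r L i
    · exact ⟨Tl G r L i + (2 * G.dist r (L[i]'hi) - G.dist r u), by omega, by omega, hvis_i.2⟩
    · by_cases hc2 : G.dist r u ≤ t + 1 - Tl G r L i
      · exact ⟨Tl G r L i + G.dist r u, by omega, by omega, hvis_i.1⟩
      · push_neg at hc1 hc2
        have hipos : L.idxOf u < i := by
          rcases Nat.lt_or_ge (L.idxOf u) i with hx | hx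
          · exact hx
          · exfalso
            have hx2 : L.idxOf u ≤ i0 := hpos_le u i0 hi0 hanc0
            have hi0i : i0 = i := by omega
            rw [hi0i] at hTi0_le hju0
            omega
        have hi1 : i - 1 < L.length := by omega
        have hanc_prev : Anc G r hconn u (L[i - 1]'hi1) :=
          hanc_interval u w (i - 1) hi1 hanc_uw (by omega) (by omega)
        have hab' : G.dist r u ≤ G.dist r (L[i - 1]'hi1) := anc_le G r hconn hanc_prev
        have hvprev := (hvisit (i - 1) hi1 u hanc_prev).2
        have hTstep : Tl G r L (i - 1) + 2 * G.dist r (L[i - 1]'hi1) = Tl G r L i := by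
          have := hTsucc (i - 1) hi1
          rw [show i - 1 + 1 = i from by omega] at this
          omega
        exact ⟨Tl G r L (i - 1) + (2 * G.dist r (L[i - 1]'hi1) - G.dist r u), by omega, by omega,
          hvprev⟩
  have hinv := decon_invariant G (2 * h - 1) (fun t => (walkOf G r hconn L).getVert t) hτ
  refine ⟨fun t => (walkOf G r hconn L).getVert t, ?_, ?_, ?_, ⟨Tl G r L L.length, ?_⟩⟩
  · exact SimpleGraph.Walk.getVert_zero _
  · intro t
    rcases Nat.lt_or_ge t (walkOf G r hconn L).length with hlt | hge
    · right
      show G.Adj ((walkOf G r hconn L).getVert t) ((walkOf G r hconn L).getVert (t + 1))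
      exact SimpleGraph.Walk.adj_getVert_succ _ hlt
    · left
      show (walkOf G r hconn L).getVert (t + 1) = (walkOf G r hconn L).getVert t
      rw [SimpleGraph.Walk.getVert_of_length_le _ hge,
        SimpleGraph.Walk.getVert_of_length_le _ (le_trans hge (Nat.le_succ t))]
  · intro t v hv
    rw [((hinv (t + 1)).1 v)]
    rw [((hinv t).1 v)] at hv
    push_neg at hv
    obtain ⟨s, hs, hsv⟩ := hv
    intro hC
    exact hC s (le_trans hs (Nat.le_succ t)) hsv
  · intro v
    rw [((hinv (Tl G r L L.length)).1 v)]
    push_neg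
    exact ⟨Tl G r L (L.idxOf v) + G.dist r v, hcov_le v, hcov v⟩
end

section
/- Let G be a √n × √n mesh. For every subset W of the vertex set with |W| = n/2, the bipartite graph of edges between W and its complement contains a matching of size at least √n. -/
open scoped Classical

lemma sub_bound (Y Z : Finset (ℕ × ℕ))
    (h1 : ∀ y ∈ Y, ∃ p ∈ Z, p.1 = y.1 ∧ y.2 < p.2)
    (h2 : ∀ y ∈ Y, ∃ q ∈ Z, q.2 = y.2 ∧ y.1 < q.1) :
    2 * Y.card + Z.card ≤ Z.card * Z.card := by
  classical
  set pf : ℕ × ℕ → ℕ × ℕ := fun y => if hy : y ∈ Y then (h1 y hy).choose else y with hpf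
  set qf : ℕ × ℕ → ℕ × ℕ := fun y => if hy : y ∈ Y then (h2 y hy).choose else y with hqf
  have hpspec : ∀ y ∈ Y, pf y ∈ Z ∧ (pf y).1 = y.1 ∧ y.2 < (pf y).2 := by
    intro y hy
    simp only [hpf, dif_pos hy]
    obtain ⟨h, h1', h2'⟩ := (h1 y hy).choose_spec
    exact ⟨h, h1', h2'⟩
  have hqspec : ∀ y ∈ Y, qf y ∈ Z ∧ (qf y).2 = y.2 ∧ y.1 < (qf y).1 := by
    intro y hy
    simp only [hqf, dif_pos hy]
    obtain ⟨h, h1', h2'⟩ := (h2 y hy).choose_spec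
    exact ⟨h, h1', h2'⟩
  set P : Finset ((ℕ × ℕ) × (ℕ × ℕ)) :=
    (Z ×ˢ Z).filter (fun a => a.1.1 < a.2.1 ∧ a.2.2 < a.1.2) with hP
  have hYP : Y.card ≤ P.card := by
    apply Finset.card_le_card_of_injOn (fun y => (pf y, qf y))
    · intro y hy
      obtain ⟨hpz, hp1, hp2⟩ := hpspec y hy
      obtain ⟨hqz, hq2, hq1⟩ := hqspec y hy
      simp only [hP, Finset.mem_coe, Finset.mem_filter, Finset.mem_product]
      exact ⟨⟨hpz, hqz⟩, by omega, by omega⟩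
    · intro y hy y' hy' heq
      replace hy := Finset.mem_coe.mp hy
      replace hy' := Finset.mem_coe.mp hy'
      obtain ⟨hpz, hp1, hp2⟩ := hpspec y hy
      obtain ⟨hqz, hq2, hq1⟩ := hqspec y hy
      obtain ⟨hpz', hp1', hp2'⟩ := hpspec y' hy'
      obtain ⟨hqz', hq2', hq1'⟩ := hqspec y' hy'
      have e1 : pf y = pf y' := congrArg Prod.fst heq
      have e2 : qf y = qf y' := congrArg Prod.snd heq
      have : y.1 = y'.1 := by rw [← hp1, ← hp1', e1]
      have : y.2 = y'.2 := by rw [← hq2, ← hq2', e2]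
      exact Prod.ext ‹y.1 = y'.1› ‹y.2 = y'.2›
  have hQcard : (P.image Prod.swap).card = P.card :=
    Finset.card_image_of_injective _ Prod.swap_injective
  have hdisj : Disjoint P (P.image Prod.swap) := by
    rw [Finset.disjoint_left]
    intro a haP haQ
    obtain ⟨b, hbP, hba⟩ := Finset.mem_image.mp haQ
    simp only [hP, Finset.mem_filter] at haP hbP
    have h1' := haP.2
    have h2' := hbP.2
    subst hba
    simp only [Prod.fst_swap, Prod.snd_swap] at h1'
    omega
  have hsub : P ∪ P.image Prod.swap ⊆ Z.offDiag := by
    intro a ha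
    rcases Finset.mem_union.mp ha with h | h
    · simp only [hP, Finset.mem_filter, Finset.mem_product] at h
      simp only [Finset.mem_offDiag]
      refine ⟨h.1.1, h.1.2, ?_⟩
      intro he; rw [he] at h; omega
    · obtain ⟨b, hbP, hba⟩ := Finset.mem_image.mp h
      simp only [hP, Finset.mem_filter, Finset.mem_product] at hbP
      subst hba
      simp only [Finset.mem_offDiag, Prod.fst_swap, Prod.snd_swap]
      refine ⟨hbP.1.2, hbP.1.1, ?_⟩
      intro he; rw [he] at hbP; omega
  have hcard : P.card + P.card ≤ Z.card * Z.card - Z.card := by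
    have h1' := Finset.card_le_card hsub
    rwa [Finset.card_union_of_disjoint hdisj, hQcard, Finset.offDiag_card] at h1'
  have hzz : Z.card ≤ Z.card * Z.card := by nlinarith [Z.card.zero_le]
  omega

private def Gr (k : ℕ) : SimpleGraph (Fin k × Fin k) :=
  SimpleGraph.boxProd (SimpleGraph.pathGraph k) (SimpleGraph.pathGraph k)

private lemma gr_adj_h {k : ℕ} (r : Fin k) (a b : Fin k) (h : a.val + 1 = b.val) :
    (Gr k).Adj (r, a) (r, b) :=
  Or.inr ⟨SimpleGraph.pathGraph_adj.mpr (Or.inl h), rfl⟩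

private lemma gr_adj_v {k : ℕ} (c : Fin k) (a b : Fin k) (h : a.val + 1 = b.val) :
    (Gr k).Adj (a, c) (b, c) :=
  Or.inl ⟨SimpleGraph.pathGraph_adj.mpr (Or.inl h), rfl⟩

private def rev {k : ℕ} (t : Fin k) : Fin k := ⟨k - 1 - t.val, by omega⟩

private lemma rev_rev {k : ℕ} (a : Fin k) : rev (rev a) = a := by
  have := a.isLt
  apply Fin.ext
  show k - 1 - (k - 1 - a.val) = a.val
  omega

private lemma rev_lt_rev {k : ℕ} {a b : Fin k} (h : a < b) : rev b < rev a := by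
  have h' : a.val < b.val := h
  have hb := b.isLt
  show k - 1 - b.val < k - 1 - a.val
  omega

private lemma walk_exists {k : ℕ} (X Y : Finset (Fin k × Fin k))
    (hd : Disjoint X Y)
    (hna : ∀ p ∈ X, ∀ q ∈ Y, ¬ (Gr k).Adj p q)
    (e : Fin k → Fin k × Fin k)
    (he : ∀ (t : ℕ) (h1 : t < k) (h2 : t + 1 < k), (Gr k).Adj (e ⟨t, h1⟩) (e ⟨t + 1, h2⟩))
    (a b : Fin k) (hab : a < b) (ha : e a ∈ Y) (hb : e b ∈ X) :
    ∃ p : Fin k, a < p ∧ p < b ∧ e p ∉ X ∧ e p ∉ Y := by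
  classical
  set S : Finset (Fin k) := Finset.univ.filter (fun p => a < p ∧ p ≤ b ∧ e p ∉ Y) with hS
  have hbS : b ∈ S := by
    simp only [hS, Finset.mem_filter, Finset.mem_univ, true_and]
    exact ⟨hab, le_refl b, fun hbY => (Finset.disjoint_left.mp hd hb) hbY⟩
  have hSne : S.Nonempty := ⟨b, hbS⟩
  set p := S.min' hSne with hp
  have hpS : p ∈ S := S.min'_mem hSne
  simp only [hS, Finset.mem_filter, Finset.mem_univ, true_and] at hpS
  obtain ⟨hap, hpb, hpY⟩ := hpS
  have hap' : a.val < p.val := hap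
  have hpb' : p.val ≤ b.val := hpb
  have hppos : 0 < p.val := by omega
  have hqk : p.val - 1 < k := by have := p.isLt; omega
  set q : Fin k := ⟨p.val - 1, hqk⟩ with hqdef
  have hq1 : q.val + 1 = p.val := by show p.val - 1 + 1 = p.val; omega
  have hqY : e q ∈ Y := by
    rcases eq_or_lt_of_le (show a ≤ q from by show a.val ≤ p.val - 1; omega) with heq | hlt
    · rw [← heq]; exact ha
    · by_contra hqnY
      have hqS : q ∈ S := by
        simp only [hS, Finset.mem_filter, Finset.mem_univ, true_and]
        exact ⟨hlt, by show p.val - 1 ≤ b.val; omega, hqnY⟩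
      have hle := S.min'_le q hqS
      rw [← hp] at hle
      have : p.val ≤ p.val - 1 := hle
      omega
  have hadj : (Gr k).Adj (e q) (e p) := by
    have h2 : q.val + 1 < k := by rw [hq1]; exact p.isLt
    have := he q.val q.isLt h2
    convert this using 2
    · exact Fin.ext hq1.symm
  have hpX : e p ∉ X := fun hpX => hna (e p) hpX (e q) hqY hadj.symm
  have hpltb : p < b := by
    rcases eq_or_lt_of_le hpb with heq | hlt
    · exact absurd (heq ▸ hb) hpX
    · exact hlt
  exact ⟨p, hap, hpltb, hpX, hpY⟩

private lemma hwit {k : ℕ} (X Y : Finset (Fin k × Fin k))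
    (hd : Disjoint X Y)
    (hna : ∀ p ∈ X, ∀ q ∈ Y, ¬ (Gr k).Adj p q)
    (cb : Fin k) (hcol : ∀ i, (i, cb) ∈ X)
    (y : Fin k × Fin k) (hy : y ∈ Y) :
    ∃ p : Fin k, (y.1, p) ∉ X ∧ (y.1, p) ∉ Y ∧
      ((y.2 < cb ∧ y.2 < p ∧ p < cb) ∨ (cb < y.2 ∧ cb < p ∧ p < y.2)) := by
  have hy' : (y.1, y.2) ∈ Y := by rwa [Prod.mk.eta]
  have hne : y.2 ≠ cb := fun h => (Finset.disjoint_left.mp hd (h ▸ hcol y.1)) hy'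
  rcases lt_or_gt_of_ne hne with hlt | hgt
  · obtain ⟨p, h1, h2, h3, h4⟩ := walk_exists X Y hd hna (fun t => (y.1, t))
      (fun t ht1 ht2 => gr_adj_h y.1 _ _ rfl) y.2 cb hlt hy' (hcol y.1)
    exact ⟨p, h3, h4, Or.inl ⟨hlt, h1, h2⟩⟩
  · obtain ⟨p, h1, h2, h3, h4⟩ := walk_exists X Y hd hna (fun t => (y.1, rev t))
      (fun t ht1 ht2 => (gr_adj_h y.1 (rev ⟨t+1, ht2⟩) (rev ⟨t, ht1⟩)
        (by show k - 1 - (t+1) + 1 = k - 1 - t; omega)).symm)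
      (rev y.2) (rev cb) (rev_lt_rev hgt)
      (by show (y.1, rev (rev y.2)) ∈ Y; rw [rev_rev]; exact hy')
      (by show (y.1, rev (rev cb)) ∈ X; rw [rev_rev]; exact hcol y.1)
    refine ⟨rev p, h3, h4, Or.inr ⟨hgt, ?_, ?_⟩⟩
    · have := rev_lt_rev h2; rwa [rev_rev] at this
    · have := rev_lt_rev h1; rwa [rev_rev] at this

private lemma vwit {k : ℕ} (X Y : Finset (Fin k × Fin k))
    (hd : Disjoint X Y)
    (hna : ∀ p ∈ X, ∀ q ∈ Y, ¬ (Gr k).Adj p q)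
    (rb : Fin k) (hrow : ∀ j, (rb, j) ∈ X)
    (y : Fin k × Fin k) (hy : y ∈ Y) :
    ∃ p : Fin k, (p, y.2) ∉ X ∧ (p, y.2) ∉ Y ∧
      ((y.1 < rb ∧ y.1 < p ∧ p < rb) ∨ (rb < y.1 ∧ rb < p ∧ p < y.1)) := by
  have hy' : (y.1, y.2) ∈ Y := by rwa [Prod.mk.eta]
  have hne : y.1 ≠ rb := fun h => (Finset.disjoint_left.mp hd (h ▸ hrow y.2)) hy'
  rcases lt_or_gt_of_ne hne with hlt | hgt
  · obtain ⟨p, h1, h2, h3, h4⟩ := walk_exists X Y hd hna (fun t => (t, y.2))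
      (fun t ht1 ht2 => gr_adj_v y.2 _ _ rfl) y.1 rb hlt hy' (hrow y.2)
    exact ⟨p, h3, h4, Or.inl ⟨hlt, h1, h2⟩⟩
  · obtain ⟨p, h1, h2, h3, h4⟩ := walk_exists X Y hd hna (fun t => (rev t, y.2))
      (fun t ht1 ht2 => (gr_adj_v y.2 (rev ⟨t+1, ht2⟩) (rev ⟨t, ht1⟩)
        (by show k - 1 - (t+1) + 1 = k - 1 - t; omega)).symm)
      (rev y.1) (rev rb) (rev_lt_rev hgt)
      (by show (rev (rev y.1), y.2) ∈ Y; rw [rev_rev]; exact hy')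
      (by show (rev (rev rb), y.2) ∈ X; rw [rev_rev]; exact hrow y.2)
    refine ⟨rev p, h3, h4, Or.inr ⟨hgt, ?_, ?_⟩⟩
    · have := rev_lt_rev h2; rwa [rev_rev] at this
    · have := rev_lt_rev h1; rwa [rev_rev] at this


private def cnd {k : ℕ} (b : Bool) (a w : Fin k) : Prop := if b then a < w else w < a

private def tr {k : ℕ} (b : Bool) (a : Fin k) : ℕ := if b then a.val else k - 1 - a.val

private lemma tr_inj {k : ℕ} (b : Bool) {a a' : Fin k} (h : tr b a = tr b a') : a = a' := by
  have h1 := a.isLt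
  have h2 := a'.isLt
  cases b <;> simp only [tr, if_true, if_false, Bool.false_eq_true] at h <;>
    (apply Fin.ext; omega)

-- strict between on the correct side gives tr-increase and quadrant membership
private lemma tr_step {k : ℕ} {b : Bool} {a p w : Fin k}
    (h : (a < w ∧ a < p ∧ p < w) ∨ (w < a ∧ w < p ∧ p < a)) (hcnd : cnd b a w) :
    tr b a < tr b p ∧ cnd b p w := by
  have h1 := a.isLt
  have h2 := p.isLt
  have h3 := w.isLt
  cases b <;> simp only [cnd, tr, if_true, if_false, Bool.false_eq_true] at hcnd ⊢
  · rcases h with ⟨hh, hh1, hh2⟩ | ⟨hh, hh1, hh2⟩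
    · exact absurd hh (by omega)
    · have e1 : w.val < p.val := hh1
      have e2 : p.val < a.val := hh2
      constructor
      · omega
      · exact hh1
  · rcases h with ⟨hh, hh1, hh2⟩ | ⟨hh, hh1, hh2⟩
    · exact ⟨hh1, hh2⟩
    · exact absurd hcnd (by have : w.val < a.val := hh; omega)

private lemma quad_bound {k : ℕ} (X Y : Finset (Fin k × Fin k))
    (hd : Disjoint X Y)
    (hna : ∀ p ∈ X, ∀ q ∈ Y, ¬ (Gr k).Adj p q)
    (rb cb : Fin k) (hrow : ∀ j, (rb, j) ∈ X) (hcol : ∀ i, (i, cb) ∈ X)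
    (bi bj : Bool) :
    2 * (Y.filter (fun v => cnd bi v.1 rb ∧ cnd bj v.2 cb)).card
      + ((Finset.univ.filter (fun v => v ∉ X ∧ v ∉ Y)).filter
          (fun v => cnd bi v.1 rb ∧ cnd bj v.2 cb)).card
      ≤ ((Finset.univ.filter (fun v => v ∉ X ∧ v ∉ Y)).filter
          (fun v => cnd bi v.1 rb ∧ cnd bj v.2 cb)).card *
        ((Finset.univ.filter (fun v => v ∉ X ∧ v ∉ Y)).filter
          (fun v => cnd bi v.1 rb ∧ cnd bj v.2 cb)).card := by
  classical
  set Q : Fin k × Fin k → Prop := fun v => cnd bi v.1 rb ∧ cnd bj v.2 cb with hQ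
  set Zf : Finset (Fin k × Fin k) := Finset.univ.filter (fun v => v ∉ X ∧ v ∉ Y) with hZf
  set φ : Fin k × Fin k → ℕ × ℕ := fun v => (tr bi v.1, tr bj v.2) with hφ
  have hφinj : Function.Injective φ := by
    intro u v huv
    simp only [hφ, Prod.mk.injEq] at huv
    exact Prod.ext (tr_inj bi huv.1) (tr_inj bj huv.2)
  have hsub := sub_bound ((Y.filter Q).image φ) ((Zf.filter Q).image φ) ?_ ?_
  · rwa [Finset.card_image_of_injective _ hφinj, Finset.card_image_of_injective _ hφinj]
      at hsub
  · -- horizontal witness: same row (first transformed coord), bigger second coord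
    intro ych hych
    obtain ⟨y, hyY, rfl⟩ := Finset.mem_image.mp hych
    rw [Finset.mem_filter] at hyY
    obtain ⟨hyY, hyQ⟩ := hyY
    obtain ⟨p, hnX, hnY, hbet⟩ := hwit X Y hd hna cb hcol y hyY
    have hstep := tr_step (b := bj) (a := y.2) (p := p) (w := cb) (by tauto) hyQ.2
    refine ⟨φ (y.1, p), ?_, ?_, ?_⟩
    · apply Finset.mem_image_of_mem
      rw [Finset.mem_filter, hZf, Finset.mem_filter]
      exact ⟨⟨Finset.mem_univ _, hnX, hnY⟩, hyQ.1, hstep.2⟩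
    · rfl
    · exact hstep.1
  · -- vertical witness
    intro ych hych
    obtain ⟨y, hyY, rfl⟩ := Finset.mem_image.mp hych
    rw [Finset.mem_filter] at hyY
    obtain ⟨hyY, hyQ⟩ := hyY
    obtain ⟨p, hnX, hnY, hbet⟩ := vwit X Y hd hna rb hrow y hyY
    have hstep := tr_step (b := bi) (a := y.1) (p := p) (w := rb) (by tauto) hyQ.1
    refine ⟨φ (p, y.2), ?_, ?_, ?_⟩
    · apply Finset.mem_image_of_mem
      rw [Finset.mem_filter, hZf, Finset.mem_filter]
      exact ⟨⟨Finset.mem_univ _, hnX, hnY⟩, hstep.2, hyQ.2⟩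
    · rfl
    · exact hstep.1
private lemma not_lt_iff {k : ℕ} {a w : Fin k} (hne : a ≠ w) : (¬ a < w) ↔ w < a := by
  constructor
  · intro h
    exact lt_of_le_of_ne (not_lt.mp h) hne.symm
  · intro h hlt
    exact absurd hlt (asymm h)

private lemma hsplit {k : ℕ} (rb cb : Fin k) (A : Finset (Fin k × Fin k))
    (hA : ∀ v ∈ A, v.1 ≠ rb ∧ v.2 ≠ cb) :
    A.card = (A.filter (fun v => cnd true v.1 rb ∧ cnd true v.2 cb)).card
           + (A.filter (fun v => cnd true v.1 rb ∧ cnd false v.2 cb)).card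
           + ((A.filter (fun v => cnd false v.1 rb ∧ cnd true v.2 cb)).card
           + (A.filter (fun v => cnd false v.1 rb ∧ cnd false v.2 cb)).card) := by
  classical
  have e0 := Finset.card_filter_add_card_filter_not
    (s := A) (p := fun v => v.1 < rb)
  have e1 := Finset.card_filter_add_card_filter_not
    (s := A.filter (fun v => v.1 < rb)) (p := fun v => v.2 < cb)
  have e2 := Finset.card_filter_add_card_filter_not
    (s := A.filter (fun v => ¬ v.1 < rb)) (p := fun v => v.2 < cb)
  rw [Finset.filter_filter, Finset.filter_filter] at e1 e2
  have c11 : A.filter (fun v => v.1 < rb ∧ v.2 < cb)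
      = A.filter (fun v => cnd true v.1 rb ∧ cnd true v.2 cb) := by
    apply Finset.filter_congr; intro v hv; simp [cnd]
  have c12 : A.filter (fun v => v.1 < rb ∧ ¬ v.2 < cb)
      = A.filter (fun v => cnd true v.1 rb ∧ cnd false v.2 cb) := by
    apply Finset.filter_congr; intro v hv
    simp only [cnd, if_true, Bool.false_eq_true, if_false]
    exact and_congr_right (fun _ => not_lt_iff (hA v hv).2)
  have c21 : A.filter (fun v => ¬ v.1 < rb ∧ v.2 < cb)
      = A.filter (fun v => cnd false v.1 rb ∧ cnd true v.2 cb) := by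
    apply Finset.filter_congr; intro v hv
    simp only [cnd, if_true, Bool.false_eq_true, if_false]
    exact and_congr_left (fun _ => not_lt_iff (hA v hv).1)
  have c22 : A.filter (fun v => ¬ v.1 < rb ∧ ¬ v.2 < cb)
      = A.filter (fun v => cnd false v.1 rb ∧ cnd false v.2 cb) := by
    apply Finset.filter_congr; intro v hv
    simp only [cnd, if_true, Bool.false_eq_true, if_false]
    exact and_congr (not_lt_iff (hA v hv).1) (not_lt_iff (hA v hv).2)
  rw [c11, c12] at e1
  rw [c21, c22] at e2
  omega

private lemma side_bound {k : ℕ} (X Y : Finset (Fin k × Fin k))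
    (hd : Disjoint X Y)
    (hna : ∀ p ∈ X, ∀ q ∈ Y, ¬ (Gr k).Adj p q)
    (rb cb : Fin k) (hrow : ∀ j, (rb, j) ∈ X) (hcol : ∀ i, (i, cb) ∈ X) :
    2 * Y.card + (Finset.univ.filter (fun v => v ∉ X ∧ v ∉ Y)).card
      ≤ (Finset.univ.filter (fun v => v ∉ X ∧ v ∉ Y)).card *
        (Finset.univ.filter (fun v => v ∉ X ∧ v ∉ Y)).card := by
  classical
  set Zf : Finset (Fin k × Fin k) := Finset.univ.filter (fun v => v ∉ X ∧ v ∉ Y) with hZf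
  have hYne : ∀ v ∈ Y, v.1 ≠ rb ∧ v.2 ≠ cb := by
    intro v hv
    constructor
    · intro h
      have : (v.1, v.2) ∈ X := by rw [h]; exact hrow v.2
      rw [Prod.mk.eta] at this
      exact (Finset.disjoint_left.mp hd this) hv
    · intro h
      have : (v.1, v.2) ∈ X := by rw [h]; exact hcol v.1
      rw [Prod.mk.eta] at this
      exact (Finset.disjoint_left.mp hd this) hv
  have hZne : ∀ v ∈ Zf, v.1 ≠ rb ∧ v.2 ≠ cb := by
    intro v hv
    rw [hZf, Finset.mem_filter] at hv
    constructor
    · intro h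
      apply hv.2.1
      have : (v.1, v.2) ∈ X := by rw [h]; exact hrow v.2
      rwa [Prod.mk.eta] at this
    · intro h
      apply hv.2.1
      have : (v.1, v.2) ∈ X := by rw [h]; exact hcol v.1
      rwa [Prod.mk.eta] at this
  have eY := hsplit rb cb Y hYne
  have eZ := hsplit rb cb Zf hZne
  have q11 := quad_bound X Y hd hna rb cb hrow hcol true true
  have q12 := quad_bound X Y hd hna rb cb hrow hcol true false
  have q21 := quad_bound X Y hd hna rb cb hrow hcol false true
  have q22 := quad_bound X Y hd hna rb cb hrow hcol false false
  rw [← hZf] at q11 q12 q21 q22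
  set y11 := (Y.filter (fun v => cnd true v.1 rb ∧ cnd true v.2 cb)).card
  set y12 := (Y.filter (fun v => cnd true v.1 rb ∧ cnd false v.2 cb)).card
  set y21 := (Y.filter (fun v => cnd false v.1 rb ∧ cnd true v.2 cb)).card
  set y22 := (Y.filter (fun v => cnd false v.1 rb ∧ cnd false v.2 cb)).card
  set z11 := (Zf.filter (fun v => cnd true v.1 rb ∧ cnd true v.2 cb)).card
  set z12 := (Zf.filter (fun v => cnd true v.1 rb ∧ cnd false v.2 cb)).card
  set z21 := (Zf.filter (fun v => cnd false v.1 rb ∧ cnd true v.2 cb)).card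
  set z22 := (Zf.filter (fun v => cnd false v.1 rb ∧ cnd false v.2 cb)).card
  have expand : (z11 + z12 + (z21 + z22)) * (z11 + z12 + (z21 + z22))
      = z11*z11 + z12*z12 + z21*z21 + z22*z22
        + 2*(z11*z12 + z11*z21 + z11*z22 + z12*z21 + z12*z22 + z21*z22) := by ring
  rw [eY, eZ, expand]
  omega
private lemma sep_card {k : ℕ} (X Y : Finset (Fin k × Fin k))
    (hd : Disjoint X Y)
    (hna : ∀ p ∈ X, ∀ q ∈ Y, ¬ (Gr k).Adj p q)
    (hX : k * k + 2 ≤ 2 * X.card + 2 * k) (hY : k * k + 2 ≤ 2 * Y.card + 2 * k) :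
    k ≤ (Finset.univ.filter (fun v => v ∉ X ∧ v ∉ Y)).card := by
  classical
  by_contra hcon
  push_neg at hcon
  set Zf : Finset (Fin k × Fin k) := Finset.univ.filter (fun v => v ∉ X ∧ v ∉ Y) with hZf
  obtain ⟨rb, hrb⟩ : ∃ rb : Fin k, rb ∉ Zf.image Prod.fst := by
    by_contra hc
    push_neg at hc
    have he : Zf.image Prod.fst = Finset.univ := Finset.eq_univ_iff_forall.mpr hc
    have h1 : (Zf.image Prod.fst).card ≤ Zf.card := Finset.card_image_le
    rw [he, Finset.card_univ, Fintype.card_fin] at h1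
    omega
  obtain ⟨cb, hcb⟩ : ∃ cb : Fin k, cb ∉ Zf.image Prod.snd := by
    by_contra hc
    push_neg at hc
    have he : Zf.image Prod.snd = Finset.univ := Finset.eq_univ_iff_forall.mpr hc
    have h1 : (Zf.image Prod.snd).card ≤ Zf.card := Finset.card_image_le
    rw [he, Finset.card_univ, Fintype.card_fin] at h1
    omega
  have hrowXY : ∀ j, (rb, j) ∈ X ∨ (rb, j) ∈ Y := by
    intro j
    by_contra hc
    push_neg at hc
    have hm : (rb, j) ∈ Zf := by
      rw [hZf, Finset.mem_filter]
      exact ⟨Finset.mem_univ _, hc.1, hc.2⟩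
    exact hrb (Finset.mem_image_of_mem Prod.fst hm)
  have hcolXY : ∀ i, (i, cb) ∈ X ∨ (i, cb) ∈ Y := by
    intro i
    by_contra hc
    push_neg at hc
    have hm : (i, cb) ∈ Zf := by
      rw [hZf, Finset.mem_filter]
      exact ⟨Finset.mem_univ _, hc.1, hc.2⟩
    exact hcb (Finset.mem_image_of_mem Prod.snd hm)
  have hwalkrow : ∀ (j0 j1 : Fin k), (rb, j0) ∈ Y → (rb, j1) ∈ X → False := by
    intro j0 j1 h0 h1
    rcases lt_trichotomy j0 j1 with hlt | heq | hgt
    · obtain ⟨p, _, _, hpX, hpY⟩ := walk_exists X Y hd hna (fun t => (rb, t))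
        (fun t ht1 ht2 => gr_adj_h rb _ _ rfl) j0 j1 hlt h0 h1
      rcases hrowXY p with h | h
      · exact hpX h
      · exact hpY h
    · exact (Finset.disjoint_left.mp hd (heq ▸ h1)) h0
    · obtain ⟨p, _, _, hpX, hpY⟩ := walk_exists X Y hd hna (fun t => (rb, rev t))
        (fun t ht1 ht2 => (gr_adj_h rb (rev ⟨t+1, ht2⟩) (rev ⟨t, ht1⟩)
          (by show k - 1 - (t+1) + 1 = k - 1 - t; omega)).symm)
        (rev j0) (rev j1) (rev_lt_rev hgt)
        (by show (rb, rev (rev j0)) ∈ Y; rw [rev_rev]; exact h0)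
        (by show (rb, rev (rev j1)) ∈ X; rw [rev_rev]; exact h1)
      rcases hrowXY (rev p) with h | h
      · exact hpX h
      · exact hpY h
  have hwalkcol : ∀ (i0 i1 : Fin k), (i0, cb) ∈ Y → (i1, cb) ∈ X → False := by
    intro i0 i1 h0 h1
    rcases lt_trichotomy i0 i1 with hlt | heq | hgt
    · obtain ⟨p, _, _, hpX, hpY⟩ := walk_exists X Y hd hna (fun t => (t, cb))
        (fun t ht1 ht2 => gr_adj_v cb _ _ rfl) i0 i1 hlt h0 h1
      rcases hcolXY p with h | h
      · exact hpX h
      · exact hpY h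
    · exact (Finset.disjoint_left.mp hd (heq ▸ h1)) h0
    · obtain ⟨p, _, _, hpX, hpY⟩ := walk_exists X Y hd hna (fun t => (rev t, cb))
        (fun t ht1 ht2 => (gr_adj_v cb (rev ⟨t+1, ht2⟩) (rev ⟨t, ht1⟩)
          (by show k - 1 - (t+1) + 1 = k - 1 - t; omega)).symm)
        (rev i0) (rev i1) (rev_lt_rev hgt)
        (by show (rev (rev i0), cb) ∈ Y; rw [rev_rev]; exact h0)
        (by show (rev (rev i1), cb) ∈ X; rw [rev_rev]; exact h1)
      rcases hcolXY (rev p) with h | h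
      · exact hpX h
      · exact hpY h
  have hrowc : (∀ j, (rb, j) ∈ X) ∨ (∀ j, (rb, j) ∈ Y) := by
    by_cases hax : ∀ j, (rb, j) ∈ X
    · exact Or.inl hax
    · push_neg at hax
      obtain ⟨j0, hj0⟩ := hax
      have hj0Y : (rb, j0) ∈ Y := (hrowXY j0).resolve_left hj0
      refine Or.inr (fun j => ?_)
      rcases hrowXY j with h | h
      · exact absurd (hwalkrow j0 j hj0Y h) (fun f => f)
      · exact h
  have hcolc : (∀ i, (i, cb) ∈ X) ∨ (∀ i, (i, cb) ∈ Y) := by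
    by_cases hax : ∀ i, (i, cb) ∈ X
    · exact Or.inl hax
    · push_neg at hax
      obtain ⟨i0, hi0⟩ := hax
      have hi0Y : (i0, cb) ∈ Y := (hcolXY i0).resolve_left hi0
      refine Or.inr (fun i => ?_)
      rcases hcolXY i with h | h
      · exact absurd (hwalkcol i0 i hi0Y h) (fun f => f)
      · exact h
  -- k = m + 1
  have hk1 : 1 ≤ k := by
    rcases Nat.eq_zero_or_pos k with h0 | h1
    · subst h0; omega
    · exact h1
  obtain ⟨m, rfl⟩ : ∃ m, k = m + 1 := ⟨k - 1, by omega⟩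
  have hmm : (m + 1) * (m + 1) = m * m + 2 * m + 1 := by ring
  rcases hrowc with hrX | hrY
  · rcases hcolc with hcX | hcY
    · have hb := side_bound X Y hd hna rb cb hrX hcX
      rw [← hZf] at hb
      have hzz : Zf.card * Zf.card ≤ m * m :=
        Nat.mul_le_mul (by omega) (by omega)
      omega
    · exact absurd ((Finset.disjoint_left.mp hd (hrX cb))) (fun f => f (hcY rb))
  · rcases hcolc with hcX | hcY
    · exact absurd ((Finset.disjoint_left.mp hd (hcX rb))) (fun f => f (hrY cb))
    · have hd' : Disjoint Y X := hd.symm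
      have hna' : ∀ p ∈ Y, ∀ q ∈ X, ¬ (Gr (m+1)).Adj p q :=
        fun p hp q hq hadj => hna q hq p hp hadj.symm
      have hb := side_bound Y X hd' hna' rb cb hrY hcY
      have hflip : (Finset.univ.filter (fun v => v ∉ Y ∧ v ∉ X)) = Zf := by
        rw [hZf]
        apply Finset.filter_congr
        intro v _
        exact and_comm
      rw [hflip] at hb
      have hzz : Zf.card * Zf.card ≤ m * m :=
        Nat.mul_le_mul (by omega) (by omega)
      omega
/-- In the `√n × √n` mesh, every vertex subset `W` of size `n/2`
admits a matching of size at least `√n` to its complement: there are `√n` pairwise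
vertex-disjoint edges, each with one endpoint in `W` and one outside `W`.
(Disjointness reduces to the `W`-endpoints being pairwise distinct and the
complement endpoints being pairwise distinct.) -/
theorem mesh_half_matching (k : ℕ) (hk : 1 ≤ k)
    (W : Finset (Fin k × Fin k)) (hW : 2 * W.card = k * k) :
    ∃ f : Fin k → (Fin k × Fin k) × (Fin k × Fin k),
      (∀ i, (f i).1 ∈ W ∧ (f i).2 ∉ W ∧
        (SimpleGraph.boxProd (SimpleGraph.pathGraph k) (SimpleGraph.pathGraph k)).Adj
          (f i).1 (f i).2) ∧
      Function.Injective (fun i => (f i).1) ∧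
      Function.Injective (fun i => (f i).2) := by
  classical
  rcases Nat.lt_or_ge k 2 with hk2 | hk2
  · interval_cases k
    · omega
  have hcardV : Fintype.card (Fin k × Fin k) = k * k := by
    rw [Fintype.card_prod, Fintype.card_fin]
  have h2k : 2 * k ≤ k * k := Nat.mul_le_mul_right k hk2
  have hkW : k ≤ W.card := by omega
  have hWc : Wᶜ.card = k * k - W.card := by
    rw [Finset.card_compl, hcardV]
  set D : ℕ := W.card - k with hD
  set nb : Fin k × Fin k → Finset (Fin k × Fin k) :=
    fun w => Wᶜ.filter (fun v => (Gr k).Adj w v) with hnb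
  set t : ↥W → Finset ((Fin k × Fin k) ⊕ Fin D) :=
    fun w => ((nb w.val).image Sum.inl) ∪ (Finset.univ.image Sum.inr) with ht
  have hall : ∀ s : Finset ↥W, s.card ≤ (s.biUnion t).card := by
    intro s
    rcases s.eq_empty_or_nonempty with rfl | hsne
    · simp
    obtain ⟨w0, hw0⟩ := hsne
    have hbu : s.biUnion t
        = ((s.biUnion (fun w => nb w.val)).image Sum.inl) ∪ (Finset.univ.image Sum.inr) := by
      ext x
      constructor
      · intro hx
        rw [Finset.mem_biUnion] at hx
        obtain ⟨w, hws, hx⟩ := hx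
        simp only [ht] at hx
        rcases Finset.mem_union.mp hx with h | h
        · apply Finset.mem_union_left
          rw [Finset.mem_image] at h ⊢
          obtain ⟨a, ha, rfl⟩ := h
          exact ⟨a, Finset.mem_biUnion.mpr ⟨w, hws, ha⟩, rfl⟩
        · exact Finset.mem_union_right _ h
      · intro hx
        rcases Finset.mem_union.mp hx with h | h
        · rw [Finset.mem_image] at h
          obtain ⟨a, ha, rfl⟩ := h
          rw [Finset.mem_biUnion] at ha ⊢
          obtain ⟨w, hws, ha⟩ := ha
          refine ⟨w, hws, ?_⟩
          simp only [ht]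
          exact Finset.mem_union_left _ (Finset.mem_image_of_mem _ ha)
        · rw [Finset.mem_biUnion]
          refine ⟨w0, hw0, ?_⟩
          simp only [ht]
          exact Finset.mem_union_right _ h
    have hdisj : Disjoint ((s.biUnion (fun w => nb w.val)).image Sum.inl)
        ((Finset.univ : Finset (Fin D)).image Sum.inr) := by
      rw [Finset.disjoint_left]
      rintro x hx1 hx2
      obtain ⟨a, _, rfl⟩ := Finset.mem_image.mp hx1
      obtain ⟨d, _, hd⟩ := Finset.mem_image.mp hx2
      exact Sum.inl_ne_inr hd.symm
    have hcard : (s.biUnion t).card = (s.biUnion (fun w => nb w.val)).card + D := by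
      rw [hbu, Finset.card_union_of_disjoint hdisj,
        Finset.card_image_of_injective _ Sum.inl_injective,
        Finset.card_image_of_injective _ Sum.inr_injective,
        Finset.card_univ, Fintype.card_fin]
    rw [hcard]
    set N : ℕ := (s.biUnion (fun w => nb w.val)).card with hN
    by_cases hsD : s.card ≤ D
    · omega
    push_neg at hsD
    by_cases hNk : k ≤ N
    · have hsW : s.card ≤ W.card := by
        have := Finset.card_le_univ s
        simpa using this
      omega
    push_neg at hNk
    -- main isoperimetric step
    set X : Finset (Fin k × Fin k) := s.image Subtype.val with hX
    set B : Finset (Fin k × Fin k) := s.biUnion (fun w => nb w.val) with hB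
    set Y : Finset (Fin k × Fin k) := Wᶜ \ B with hY
    have hXcard : X.card = s.card := Finset.card_image_of_injective _ Subtype.val_injective
    have hXW : ∀ v ∈ X, v ∈ W := by
      intro v hv
      obtain ⟨w, _, rfl⟩ := Finset.mem_image.mp hv
      exact w.2
    have hdXY : Disjoint X Y := by
      rw [Finset.disjoint_left]
      intro v hvX hvY
      rw [hY, Finset.mem_sdiff, Finset.mem_compl] at hvY
      exact hvY.1 (hXW v hvX)
    have hnaXY : ∀ p ∈ X, ∀ q ∈ Y, ¬ (Gr k).Adj p q := by
      intro p hp q hq hadj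
      rw [hY, Finset.mem_sdiff] at hq
      apply hq.2
      obtain ⟨w, hws, rfl⟩ := Finset.mem_image.mp hp
      rw [hB, Finset.mem_biUnion]
      refine ⟨w, hws, ?_⟩
      rw [hnb, Finset.mem_filter]
      exact ⟨hq.1, hadj⟩
    have hYB : Wᶜ.card ≤ Y.card + N := by
      have hsub : Wᶜ ⊆ Y ∪ B := by
        intro v hv
        by_cases hvB : v ∈ B
        · exact Finset.mem_union_right _ hvB
        · exact Finset.mem_union_left _ (by rw [hY, Finset.mem_sdiff]; exact ⟨hv, hvB⟩)
      calc Wᶜ.card ≤ (Y ∪ B).card := Finset.card_le_card hsub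
        _ ≤ Y.card + B.card := Finset.card_union_le _ _
    have hsep := sep_card X Y hdXY hnaXY (by omega) (by omega)
    set Zf : Finset (Fin k × Fin k) := Finset.univ.filter (fun v => v ∉ X ∧ v ∉ Y) with hZf
    have hsum : X.card + Y.card + Zf.card ≤ k * k := by
      have hdXZ : Disjoint (X ∪ Y) Zf := by
        rw [Finset.disjoint_left]
        intro v hv hvZ
        rw [hZf, Finset.mem_filter] at hvZ
        rcases Finset.mem_union.mp hv with h | h
        · exact hvZ.2.1 h
        · exact hvZ.2.2 h
      have h1 : (X ∪ Y ∪ Zf).card ≤ k * k := by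
        have := Finset.card_le_univ (X ∪ Y ∪ Zf)
        rwa [hcardV] at this
      rw [Finset.card_union_of_disjoint hdXZ, Finset.card_union_of_disjoint hdXY] at h1
      exact h1
    omega
  obtain ⟨f, hfinj, hfmem⟩ := (Finset.all_card_le_biUnion_card_iff_exists_injective t).mp hall
  set good : Finset ↥W := Finset.univ.filter (fun w => (f w).isLeft) with hgood
  have hbadcard : (Finset.univ.filter (fun w : ↥W => ¬ (f w).isLeft)).card ≤ D := by
    have hinj : ∀ w ∈ Finset.univ.filter (fun w : ↥W => ¬ (f w).isLeft),
        ∃ d : Fin D, f w = Sum.inr d := by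
      intro w hw
      rw [Finset.mem_filter] at hw
      rcases hsum : f w with a | d
      · rw [hsum] at hw; simp at hw
      · exact ⟨d, rfl⟩
    have hc := Finset.card_le_card_of_injOn (f := f)
      (s := Finset.univ.filter (fun w : ↥W => ¬ (f w).isLeft))
      (t := (Finset.univ : Finset (Fin D)).image Sum.inr) ?_ ?_
    · rw [Finset.card_image_of_injective _ Sum.inr_injective, Finset.card_univ,
        Fintype.card_fin] at hc
      exact hc
    · intro w hw
      obtain ⟨d, hd⟩ := hinj w hw
      rw [hd]
      exact Finset.mem_image_of_mem _ (Finset.mem_univ d)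
    · intro w _ w' _ heq
      exact hfinj heq
  have hWcard : (Finset.univ : Finset ↥W).card = W.card := by simp
  have hgoodcard : k ≤ good.card := by
    have hsp := Finset.card_filter_add_card_filter_not
      (s := (Finset.univ : Finset ↥W)) (p := fun w => (f w).isLeft)
    rw [← hgood] at hsp
    omega
  obtain ⟨T, hTsub, hTcard⟩ := Finset.exists_subset_card_eq hgoodcard
  have hsel : ∀ w : ↥T, ∃ a : Fin k × Fin k,
      f w.1 = Sum.inl a ∧ a ∉ W ∧ (Gr k).Adj w.1.1 a := by
    rintro ⟨w, hwT⟩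
    have hleft : (f w).isLeft := by
      have := hTsub hwT
      rw [hgood, Finset.mem_filter] at this
      exact this.2
    obtain ⟨a, ha⟩ := Sum.isLeft_iff.mp hleft
    have hmem := hfmem w
    simp only [ht] at hmem
    rw [ha] at hmem
    rcases Finset.mem_union.mp hmem with h | h
    · obtain ⟨b, hb, hba⟩ := Finset.mem_image.mp h
      have hbeq : b = a := Sum.inl_injective hba
      subst hbeq
      rw [hnb, Finset.mem_filter, Finset.mem_compl] at hb
      exact ⟨b, ha, hb.1, hb.2⟩
    · obtain ⟨d, _, hd⟩ := Finset.mem_image.mp h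
      exact absurd hd (by simp)
  set e := T.equivFinOfCardEq hTcard with he
  refine ⟨fun i => ((e.symm i).1.1, (hsel (e.symm i)).choose), ?_, ?_, ?_⟩
  · intro i
    obtain ⟨heq, hnW, hadj⟩ := (hsel (e.symm i)).choose_spec
    exact ⟨(e.symm i).1.2, hnW, hadj⟩
  · intro i j hij
    simp only at hij
    have h1 : ((e.symm i) : ↥T).1 = ((e.symm j) : ↥T).1 := Subtype.ext hij
    have h2 : (e.symm i) = (e.symm j) := Subtype.ext h1
    exact e.symm.injective h2
  · intro i j hij
    simp only at hij
    obtain ⟨heqi, _, _⟩ := (hsel (e.symm i)).choose_spec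
    obtain ⟨heqj, _, _⟩ := (hsel (e.symm j)).choose_spec
    have hfeq : f ((e.symm i) : ↥T).1 = f ((e.symm j) : ↥T).1 := by
      rw [heqi, heqj, hij]
    have h1 := hfinj hfeq
    have h2 : (e.symm i) = (e.symm j) := Subtype.ext h1
    exact e.symm.injective h2
end
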